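/- arXiv:2501.17794 — 6 statements merged into one kernel-verified Lean document; each statement's English description precedes it below -/
import Mathlib

section
/- Let f : Fin N → L with the linear adjacency structure. If a connected component C of the sublevel set {i | f i ≤ l} is disjoint from the strict sublevel set {i | f i < l} (i.e., a new component is born at level l), then C is a flat local minimum: C is a set of consecutive indices all with value l, and every index adjacent to C but outside C has value strictly greater than l. -/
/-- One adjacency step inside a subset `S` of the linear domain `Fin N`. -/
def AdjStep {N : ℕ} (S : Set (Fin N)) (x y : Fin N) : Prop :=
  x ∈ S ∧ y ∈ S ∧ (x.val + 1 = y.val ∨ y.val + 1 = x.val)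

/-- `a` and `b` are joined by a chain of adjacent elements staying in `S`. -/
def ConnectedIn {N : ℕ} (S : Set (Fin N)) (a b : Fin N) : Prop :=
  Relation.ReflTransGen (AdjStep S) a b

/-- `C` is a connected component of `S`. -/
def IsConnComp {N : ℕ} (S C : Set (Fin N)) : Prop :=
  ∃ a, a ∈ S ∧ C = {b | ConnectedIn S a b}

theorem born_component_is_flat_local_min {N : ℕ} {L : Type*} [LinearOrder L]
    (f : Fin N → L) (l : L) (C : Set (Fin N))
    (hC : IsConnComp {i | f i ≤ l} C)
    (hdisj : C ∩ {i | f i < l} = ∅) :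
    (∀ i ∈ C, f i = l) ∧
    (∀ i ∈ C, ∀ j ∈ C, ∀ k : Fin N, i.val ≤ k.val → k.val ≤ j.val → k ∈ C) ∧
    (∀ i : Fin N, ∀ j ∈ C, (i.val + 1 = j.val ∨ j.val + 1 = i.val) → i ∉ C → l < f i) := by
  obtain ⟨a, ha, rfl⟩ := hC
  set S : Set (Fin N) := {i | f i ≤ l} with hS
  have hsymm : Symmetric (AdjStep S) := by
    rintro x y ⟨hx, hy, h⟩; exact ⟨hy, hx, h.symm⟩
  have hmem : ∀ b, ConnectedIn S a b → b ∈ S := by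
    intro b h
    induction h with
    | refl => exact ha
    | tail _ step _ => exact step.2.1
  have hval : ∀ b, ConnectedIn S a b → f b = l := by
    intro b hb
    have h1 : f b ≤ l := hmem b hb
    have h2 : ¬ f b < l := by
      intro hlt
      have : b ∈ {b | ConnectedIn S a b} ∩ {i | f i < l} := ⟨hb, hlt⟩
      simp [hdisj] at this
    exact le_antisymm h1 (not_lt.mp h2)
  refine ⟨fun i hi => hval i hi, ?_, ?_⟩
  · -- intermediate value lemma
    have key : ∀ x y : Fin N, ConnectedIn S x y → ∀ k : Fin N,
        (x.val ≤ k.val ∧ k.val ≤ y.val) ∨ (y.val ≤ k.val ∧ k.val ≤ x.val) →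
        ConnectedIn S x k := by
      intro x y h
      induction h with
      | refl =>
        intro k hk
        have : x = k := by
          apply Fin.ext; omega
        exact this ▸ Relation.ReflTransGen.refl
      | @tail y z hxy step ih =>
        intro k hk
        by_cases hky : (x.val ≤ k.val ∧ k.val ≤ y.val) ∨ (y.val ≤ k.val ∧ k.val ≤ x.val)
        · exact ih k hky
        · have : k = z := by
            apply Fin.ext
            obtain ⟨_, _, hadj⟩ := step
            omega
          exact this ▸ hxy.tail step
    intro i hi j hj k hik hkj
    have hij : ConnectedIn S i j :=
      Relation.ReflTransGen.trans (haveI : Std.Symm (AdjStep S) := ⟨fun _ _ h => hsymm h⟩; Std.Symm.symm (r := Relation.ReflTransGen (AdjStep S)) _ _ hi) hj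
    have : ConnectedIn S i k := key i j hij k (Or.inl ⟨hik, hkj⟩)
    exact Relation.ReflTransGen.trans hi this
  · intro i j hj hadj hiC
    by_contra hle
    push_neg at hle
    exact hiC (hj.tail ⟨hmem j hj, hle, hadj.symm⟩)
end

section
/- Let f : Fin N → L with linear adjacency. Suppose {m, ..., n} with m ≥ 1 and n ≤ N-2 is a flat local maximum at level l (f(k) = l for m ≤ k ≤ n, f(m-1) < l, f(n+1) < l). Then indices m-1 and n+1 lie in distinct connected components of the strict sublevel set {i | f i < l}, but lie in the same connected component of the sublevel set {i | f i ≤ l}. -/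
theorem flat_local_max_merges_components {N : ℕ} {L : Type*} [LinearOrder L]
    (f : Fin N → L) (l : L) (m n : ℕ)
    (hm : 1 ≤ m) (hmn : m ≤ n) (hn : n ≤ N - 2)
    (a b : Fin N) (ha : a.val = m - 1) (hb : b.val = n + 1)
    (hflat : ∀ i : Fin N, m ≤ i.val → i.val ≤ n → f i = l)
    (hleft : f a < l) (hright : f b < l) :
    ¬ ConnectedIn {i | f i < l} a b ∧ ConnectedIn {i | f i ≤ l} a b := by
  have hbN : n + 1 < N := hb ▸ b.isLt
  constructor
  · intro h
    have key : ∀ x : Fin N, Relation.ReflTransGen (AdjStep {i | f i < l}) a x → x.val < m := by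
      intro x hx
      induction hx with
      | refl => omega
      | @tail y z _ step ih =>
        obtain ⟨_, hzS, hadj⟩ := step
        by_contra hz
        push_neg at hz
        have hzm : z.val = m := by omega
        have : f z = l := hflat z (by omega) (by omega)
        simp only [Set.mem_setOf_eq, this, lt_self_iff_false] at hzS
    have := key b h
    omega
  · have mem : ∀ x : Fin N, m - 1 ≤ x.val → x.val ≤ n + 1 → f x ≤ l := by
      intro x h1 h2
      rcases Nat.lt_or_ge x.val m with h | h
      · have : x = a := Fin.ext (by omega)
        exact this ▸ hleft.le
      rcases Nat.lt_or_ge x.val (n + 1) with h' | h'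
      · exact (hflat x h (by omega)).le
      · have : x = b := Fin.ext (by omega)
        exact this ▸ hright.le
    have chain : ∀ j, ∀ _ : m - 1 + j ≤ n + 1, ConnectedIn {i | f i ≤ l} a ⟨m - 1 + j, by omega⟩ := by
      intro j
      induction j with
      | zero =>
        intro hj
        have he : (⟨m - 1 + 0, by omega⟩ : Fin N) = a := Fin.ext (by show m - 1 + 0 = a.val; omega)
        rw [he]
        exact Relation.ReflTransGen.refl
      | succ j ih =>
        intro hj
        refine (ih (by omega)).tail ?_
        exact ⟨mem _ (by show m - 1 ≤ m - 1 + j; omega) (by show m - 1 + j ≤ n + 1; omega),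
          mem _ (by show m - 1 ≤ m - 1 + (j + 1); omega) (by show m - 1 + (j + 1) ≤ n + 1; omega),
          Or.inl (by show m - 1 + j + 1 = m - 1 + (j + 1); omega)⟩
    have hc := chain (n + 2 - m) (by omega)
    have heq : (⟨m - 1 + (n + 2 - m), by omega⟩ : Fin N) = b :=
      Fin.ext (by show m - 1 + (n + 2 - m) = b.val; omega)
    rwa [heq] at hc
end

section
/- Let f : ZMod N → L (circular domain, N ≥ 2) with adjacency i ~ i+1 (mod N). Define a local minimum (resp. maximum) to be a maximal run of consecutive indices of equal value whose two neighboring values outside the run are both strictly greater (resp. strictly smaller). Then the number of local minima of f equals the number of local maxima of f. -/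
/-- A maximal flat of `f` on the circular domain `ZMod N` starting at `s` with
length `k` that is a local minimum: all `k` cyclically consecutive values from
`s` are equal and both outer neighbors are strictly greater. -/
def MinFlatC {N : ℕ} {L : Type*} [LinearOrder L] (f : ZMod N → L) (s : ZMod N) (k : ℕ) : Prop :=
  0 < k ∧ k < N ∧ (∀ j : ℕ, j < k → f (s + (j : ZMod N)) = f s) ∧
  f s < f (s - 1) ∧ f s < f (s + (k : ZMod N))

/-- A maximal flat that is a local maximum: both outer neighbors strictly smaller. -/
def MaxFlatC {N : ℕ} {L : Type*} [LinearOrder L] (f : ZMod N → L) (s : ZMod N) (k : ℕ) : Prop :=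
  0 < k ∧ k < N ∧ (∀ j : ℕ, j < k → f (s + (j : ZMod N)) = f s) ∧
  f (s - 1) < f s ∧ f (s + (k : ZMod N)) < f s


namespace CircAux

variable {N : ℕ} {L : Type*} [LinearOrder L]

def gapP (f : ZMod N → L) (i : ZMod N) (d : ℕ) : Prop :=
  0 < d ∧ (f (i + (d : ZMod N)) ≠ f (i + (d : ZMod N) + 1) ∨ d = N)

instance (f : ZMod N → L) (i : ZMod N) : DecidablePred (gapP f i) := fun _ => by
  unfold gapP; infer_instance

lemma gapP_exists (hN : 0 < N) (f : ZMod N → L) (i : ZMod N) : ∃ d, gapP f i d :=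
  ⟨N, hN, Or.inr rfl⟩

noncomputable def gap (hN : 0 < N) (f : ZMod N → L) (i : ZMod N) : ℕ :=
  Nat.find (gapP_exists hN f i)

lemma gap_pos (hN : 0 < N) (f : ZMod N → L) (i : ZMod N) : 0 < gap hN f i :=
  (Nat.find_spec (gapP_exists hN f i)).1

lemma gap_le (hN : 0 < N) (f : ZMod N → L) (i : ZMod N) : gap hN f i ≤ N :=
  Nat.find_le ⟨hN, Or.inr rfl⟩

lemma gap_chg (hN : 0 < N) (f : ZMod N → L) (i : ZMod N) (hi : f i ≠ f (i + 1)) :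
    f (i + (gap hN f i : ZMod N)) ≠ f (i + (gap hN f i : ZMod N) + 1) := by
  rcases (Nat.find_spec (gapP_exists hN f i)).2 with h | h
  · exact h
  · show f (i + ((gap hN f i : ℕ) : ZMod N)) ≠ _
    rw [show (gap hN f i : ℕ) = N from h]
    simpa using hi

lemma gap_no_chg (hN : 0 < N) (f : ZMod N → L) (i : ZMod N) {d : ℕ} (hd : 0 < d)
    (hlt : d < gap hN f i) : f (i + (d : ZMod N)) = f (i + (d : ZMod N) + 1) := by
  have h := Nat.find_min (gapP_exists hN f i) hlt
  unfold gapP at h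
  push_neg at h
  exact (h hd).1


lemma gap_flat (hN : 0 < N) (f : ZMod N → L) (i : ZMod N) :
    ∀ j : ℕ, 0 < j → j ≤ gap hN f i → f (i + (j : ZMod N)) = f (i + 1) := by
  intro j
  induction j with
  | zero => intro h; exact absurd h (lt_irrefl 0)
  | succ n ih =>
    intro _ hle
    rcases Nat.eq_zero_or_pos n with hn | hn
    · subst hn; norm_num
    · have h1 : f (i + (n : ZMod N)) = f (i + (n : ZMod N) + 1) :=
        gap_no_chg hN f i hn (lt_of_lt_of_le (Nat.lt_succ_self n) hle)
      have : ((n + 1 : ℕ) : ZMod N) = (n : ZMod N) + 1 := by push_cast; ring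
      rw [this, ← add_assoc, ← h1]
      exact ih hn (le_of_lt (lt_of_lt_of_le (Nat.lt_succ_self n) hle))

lemma gap_eq (hN : 0 < N) (f : ZMod N → L) (i : ZMod N) {k : ℕ} (hk : 0 < k) (hkN : k < N)
    (hchg : f (i + (k : ZMod N)) ≠ f (i + (k : ZMod N) + 1))
    (hno : ∀ d : ℕ, 0 < d → d < k → f (i + (d : ZMod N)) = f (i + (d : ZMod N) + 1)) :
    gap hN f i = k := by
  apply le_antisymm
  · exact Nat.find_le ⟨hk, Or.inl hchg⟩
  · by_contra hlt
    push_neg at hlt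
    have hspec := Nat.find_spec (gapP_exists hN f i)
    have hdef : Nat.find (gapP_exists hN f i) = gap hN f i := rfl
    rw [hdef] at hspec
    rcases hspec.2 with h | h
    · exact h (hno _ hspec.1 hlt)
    · omega

def pgapP (f : ZMod N → L) (i : ZMod N) (d : ℕ) : Prop :=
  0 < d ∧ (f (i - (d : ZMod N)) ≠ f (i - (d : ZMod N) + 1) ∨ d = N)

instance (f : ZMod N → L) (i : ZMod N) : DecidablePred (pgapP f i) := fun _ => by
  unfold pgapP; infer_instance

lemma pgapP_exists (hN : 0 < N) (f : ZMod N → L) (i : ZMod N) : ∃ d, pgapP f i d :=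
  ⟨N, hN, Or.inr rfl⟩

noncomputable def pgap (hN : 0 < N) (f : ZMod N → L) (i : ZMod N) : ℕ :=
  Nat.find (pgapP_exists hN f i)

lemma pgap_eq (hN : 0 < N) (f : ZMod N → L) (i : ZMod N) {k : ℕ} (hk : 0 < k) (hkN : k ≤ N)
    (hchg : f (i - (k : ZMod N)) ≠ f (i - (k : ZMod N) + 1))
    (hno : ∀ d : ℕ, 0 < d → d < k → f (i - (d : ZMod N)) = f (i - (d : ZMod N) + 1)) :
    pgap hN f i = k := by
  apply le_antisymm
  · exact Nat.find_le ⟨hk, Or.inl hchg⟩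
  · by_contra hlt
    push_neg at hlt
    have hspec := Nat.find_spec (pgapP_exists hN f i)
    have hdef : Nat.find (pgapP_exists hN f i) = pgap hN f i := rfl
    rw [hdef] at hspec
    rcases hspec.2 with h | h
    · exact h (hno _ hspec.1 hlt)
    · omega

/-- The previous-change gap of `i + gap i` is `gap i`, provided there is a change at `i`. -/
lemma pgap_add_gap (hN : 0 < N) (f : ZMod N → L) (i : ZMod N) (hi : f i ≠ f (i + 1)) :
    pgap hN f (i + (gap hN f i : ZMod N)) = gap hN f i := by
  set g := gap hN f i with hg
  apply pgap_eq hN f _ (gap_pos hN f i) (gap_le hN f i)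
  · have : i + (g : ZMod N) - (g : ZMod N) = i := by ring
    rw [this]; exact hi
  · intro d hd hdg
    have hsub : i + (g : ZMod N) - (d : ZMod N) = i + ((g - d : ℕ) : ZMod N) := by
      rw [Nat.cast_sub (le_of_lt hdg)]; ring
    rw [hsub]
    exact gap_no_chg hN f i (by omega) (by omega)

/-- The successor map on change points, injective. -/
lemma sigma_inj (hN : 0 < N) (f : ZMod N → L) (i j : ZMod N)
    (hi : f i ≠ f (i + 1)) (hj : f j ≠ f (j + 1))
    (h : i + (gap hN f i : ZMod N) = j + (gap hN f j : ZMod N)) : i = j := by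
  have h1 := pgap_add_gap hN f i hi
  have h2 := pgap_add_gap hN f j hj
  rw [h] at h1
  have hgg : gap hN f i = gap hN f j := h1.symm.trans h2
  have : i + (gap hN f i : ZMod N) - (gap hN f i : ZMod N)
      = j + (gap hN f j : ZMod N) - (gap hN f j : ZMod N) := by rw [h, hgg]
  simpa using this


lemma cast_shift (hN : 0 < N) (s : ZMod N) {k : ℕ} (hk : 0 < k) :
    (s - 1) + (k : ZMod N) = s + ((k - 1 : ℕ) : ZMod N) := by
  rw [Nat.cast_sub hk]; push_cast; ring

lemma min_iff (hN : 0 < N) (f : ZMod N → L) (s : ZMod N) :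
    (∃ k, MinFlatC f s k) ↔
      (f ((s - 1) + 1) < f (s - 1) ∧
        f ((s - 1) + (gap hN f (s - 1) : ZMod N)) <
          f ((s - 1) + (gap hN f (s - 1) : ZMod N) + 1)) := by
  have hs : (s - 1) + 1 = s := sub_add_cancel s 1
  constructor
  · rintro ⟨k, hk0, hkN, hflat, hlo, hhi⟩
    have hik : (s - 1) + (k : ZMod N) = s + ((k - 1 : ℕ) : ZMod N) := cast_shift hN s hk0
    have hfik : f ((s - 1) + (k : ZMod N)) = f s := by
      rw [hik]; exact hflat (k - 1) (by omega)
    have hik1 : (s - 1) + (k : ZMod N) + 1 = s + (k : ZMod N) := by ring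
    have hgap : gap hN f (s - 1) = k := by
      apply gap_eq hN f _ hk0 hkN
      · rw [hfik, hik1]; exact ne_of_lt hhi
      · intro d hd hdk
        have h1 : (s - 1) + (d : ZMod N) = s + ((d - 1 : ℕ) : ZMod N) := cast_shift hN s hd
        have h2 : (s - 1) + (d : ZMod N) + 1 = s + (d : ZMod N) := by ring
        rw [h2, h1, hflat (d - 1) (by omega), hflat d hdk]
    rw [hgap]
    refine ⟨by rw [hs]; exact hlo, ?_⟩
    rw [hfik, hik1]; exact hhi
  · rintro ⟨h1, h2⟩
    set i := s - 1 with hidef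
    set k := gap hN f i with hkdef
    have hk0 : 0 < k := gap_pos hN f i
    have hkN : k ≠ N := by
      intro h
      rw [h] at h2
      simp only [ZMod.natCast_self, add_zero] at h2
      exact absurd h2 (not_lt.mpr (le_of_lt h1))
    have hflat : ∀ j : ℕ, 0 < j → j ≤ k → f (i + (j : ZMod N)) = f (i + 1) :=
      gap_flat hN f i
    refine ⟨k, hk0, lt_of_le_of_ne (gap_le hN f i) hkN, ?_, ?_, ?_⟩
    · intro j hj
      have : s + (j : ZMod N) = i + ((j + 1 : ℕ) : ZMod N) := by
        rw [hidef]; push_cast; ring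
      rw [this, hflat (j + 1) (by omega) (by omega), hs]
    · have h1' := h1; rw [hs] at h1'; exact h1'
    · have e1 : s + (k : ZMod N) = i + (k : ZMod N) + 1 := by rw [hidef]; ring
      have e2 : f (i + (k : ZMod N)) = f s := by rw [hflat k hk0 le_rfl, hs]
      rw [e1, ← e2]; exact h2

lemma max_iff (hN : 0 < N) (f : ZMod N → L) (s : ZMod N) :
    (∃ k, MaxFlatC f s k) ↔
      (f (s - 1) < f ((s - 1) + 1) ∧
        f ((s - 1) + (gap hN f (s - 1) : ZMod N) + 1) <
          f ((s - 1) + (gap hN f (s - 1) : ZMod N))) := by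
  have hs : (s - 1) + 1 = s := sub_add_cancel s 1
  constructor
  · rintro ⟨k, hk0, hkN, hflat, hlo, hhi⟩
    have hik : (s - 1) + (k : ZMod N) = s + ((k - 1 : ℕ) : ZMod N) := cast_shift hN s hk0
    have hfik : f ((s - 1) + (k : ZMod N)) = f s := by
      rw [hik]; exact hflat (k - 1) (by omega)
    have hik1 : (s - 1) + (k : ZMod N) + 1 = s + (k : ZMod N) := by ring
    have hgap : gap hN f (s - 1) = k := by
      apply gap_eq hN f _ hk0 hkN
      · rw [hfik, hik1]; exact ne_of_gt hhi
      · intro d hd hdk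
        have h1 : (s - 1) + (d : ZMod N) = s + ((d - 1 : ℕ) : ZMod N) := cast_shift hN s hd
        have h2 : (s - 1) + (d : ZMod N) + 1 = s + (d : ZMod N) := by ring
        rw [h2, h1, hflat (d - 1) (by omega), hflat d hdk]
    rw [hgap]
    refine ⟨by rw [hs]; exact hlo, ?_⟩
    rw [hfik, hik1]; exact hhi
  · rintro ⟨h1, h2⟩
    set i := s - 1 with hidef
    set k := gap hN f i with hkdef
    have hk0 : 0 < k := gap_pos hN f i
    have hkN : k ≠ N := by
      intro h
      rw [h] at h2
      simp only [ZMod.natCast_self, add_zero] at h2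
      exact absurd h2 (not_lt.mpr (le_of_lt h1))
    have hflat : ∀ j : ℕ, 0 < j → j ≤ k → f (i + (j : ZMod N)) = f (i + 1) :=
      gap_flat hN f i
    refine ⟨k, hk0, lt_of_le_of_ne (gap_le hN f i) hkN, ?_, ?_, ?_⟩
    · intro j hj
      have : s + (j : ZMod N) = i + ((j + 1 : ℕ) : ZMod N) := by
        rw [hidef]; push_cast; ring
      rw [this, hflat (j + 1) (by omega) (by omega), hs]
    · have h1' := h1; rw [hs] at h1'; exact h1'
    · have e1 : s + (k : ZMod N) = i + (k : ZMod N) + 1 := by rw [hidef]; ring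
      have e2 : f (i + (k : ZMod N)) = f s := by rw [hflat k hk0 le_rfl, hs]
      rw [e1, ← e2]; exact h2


open Finset in
lemma count_key {α : Type*} [Fintype α] (g : α → α) (c dn up : α → Prop)
    (hdc : ∀ i, dn i → c i) (huc : ∀ i, up i → c i)
    (hcdu : ∀ i, c i → dn i ∨ up i) (hndu : ∀ i, ¬(dn i ∧ up i))
    (hgc : ∀ i, c i → c (g i))
    (hinj : ∀ i j, c i → c j → g i = g j → i = j) :
    Nat.card {i // dn i ∧ up (g i)} = Nat.card {i // up i ∧ dn (g i)} := by
  classical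
  rw [Nat.card_eq_fintype_card, Nat.card_eq_fintype_card, Fintype.card_subtype,
    Fintype.card_subtype]
  set C := univ.filter c with hC
  set D := univ.filter dn with hD
  set U := univ.filter up with hU
  have hinjOn : ∀ s : Finset α, s ⊆ C → Set.InjOn g s := by
    intro s hsub i hi j hj hij
    have hi' := Finset.mem_filter.mp (hsub hi)
    have hj' := Finset.mem_filter.mp (hsub hj)
    exact hinj i j hi'.2 hj'.2 hij
  have himg : C.image g = C := by
    apply Finset.eq_of_subset_of_card_le
    · intro j hj
      rcases Finset.mem_image.mp hj with ⟨i, hi, rfl⟩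
      have := (Finset.mem_filter.mp hi).2
      exact Finset.mem_filter.mpr ⟨Finset.mem_univ _, hgc i this⟩
    · rw [Finset.card_image_of_injOn (hinjOn C (subset_refl C))]
  have key : ∀ p : α → Prop, (∀ i, p i → c i) →
      (C.filter (fun i => p (g i))).card = (univ.filter p).card := by
    intro p hpc
    have himg2 : (C.filter (fun i => p (g i))).image g = univ.filter p := by
      ext j
      constructor
      · intro hj
        rcases Finset.mem_image.mp hj with ⟨i, hi, rfl⟩
        exact Finset.mem_filter.mpr ⟨Finset.mem_univ _, (Finset.mem_filter.mp hi).2⟩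
      · intro hj
        have hpj := (Finset.mem_filter.mp hj).2
        have hjC : j ∈ C := Finset.mem_filter.mpr ⟨Finset.mem_univ _, hpc j hpj⟩
        rw [← himg] at hjC
        rcases Finset.mem_image.mp hjC with ⟨i, hi, rfl⟩
        exact Finset.mem_image.mpr ⟨i, Finset.mem_filter.mpr ⟨hi, hpj⟩, rfl⟩
    rw [← himg2]
    rw [Finset.card_image_of_injOn (hinjOn _ (Finset.filter_subset _ _))]
  -- partition identities
  have e1 : (D.filter (fun i => dn (g i))).card + (D.filter (fun i => up (g i))).card
      = D.card := by
    rw [show D.filter (fun i => up (g i)) = D.filter (fun i => ¬ dn (g i)) from ?_]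
    · exact Finset.card_filter_add_card_filter_not _
    · apply Finset.filter_congr
      intro i hi
      have hci : c i := hdc i (Finset.mem_filter.mp hi).2
      have hcg : c (g i) := hgc i hci
      constructor
      · intro hu hd; exact hndu (g i) ⟨hd, hu⟩
      · intro hnd; exact (hcdu (g i) hcg).resolve_left hnd
  have e2 : (D.filter (fun i => dn (g i))).card + (U.filter (fun i => dn (g i))).card
      = D.card := by
    have hsplit := Finset.card_filter_add_card_filter_not
      (s := C.filter (fun i => dn (g i))) (p := dn)
    have hA : (C.filter (fun i => dn (g i))).filter dn = D.filter (fun i => dn (g i)) := by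
      ext i
      simp only [Finset.mem_filter, Finset.mem_univ, true_and, hC, hD]
      constructor
      · rintro ⟨⟨_, h2⟩, h3⟩; exact ⟨h3, h2⟩
      · rintro ⟨h1, h2⟩; exact ⟨⟨hdc i h1, h2⟩, h1⟩
    have hB : (C.filter (fun i => dn (g i))).filter (fun i => ¬ dn i)
        = U.filter (fun i => dn (g i)) := by
      ext i
      simp only [Finset.mem_filter, Finset.mem_univ, true_and, hC, hU]
      constructor
      · rintro ⟨⟨h1, h2⟩, h3⟩; exact ⟨(hcdu i h1).resolve_left h3, h2⟩
      · rintro ⟨h1, h2⟩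
        exact ⟨⟨huc i h1, h2⟩, fun hd => hndu i ⟨hd, h1⟩⟩
    rw [hA, hB] at hsplit
    rw [hsplit]
    exact key dn hdc
  have hmin : univ.filter (fun i => dn i ∧ up (g i)) = D.filter (fun i => up (g i)) := by
    ext i
    simp only [Finset.mem_filter, Finset.mem_univ, true_and, hD, and_assoc]
  have hmax : univ.filter (fun i => up i ∧ dn (g i)) = U.filter (fun i => dn (g i)) := by
    ext i
    simp only [Finset.mem_filter, Finset.mem_univ, true_and, hU, and_assoc]
  rw [hmin, hmax]
  omega

end CircAux


theorem circular_num_minima_eq_num_maxima {N : ℕ} (hN : 2 ≤ N) {L : Type*}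
    [LinearOrder L] (f : ZMod N → L) (hnc : ∃ i j : ZMod N, f i ≠ f j) :
    Nat.card {s : ZMod N // ∃ k, MinFlatC f s k} =
      Nat.card {s : ZMod N // ∃ k, MaxFlatC f s k} := by
  classical
  have h0 : 0 < N := by omega
  haveI : NeZero N := ⟨by omega⟩
  calc Nat.card {s : ZMod N // ∃ k, MinFlatC f s k}
      = Nat.card {i : ZMod N // f (i + 1) < f i ∧
          f (i + (CircAux.gap h0 f i : ZMod N)) < f (i + (CircAux.gap h0 f i : ZMod N) + 1)} :=
        Nat.card_congr (Equiv.subtypeEquiv (Equiv.subRight (1 : ZMod N))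
          (fun s => CircAux.min_iff h0 f s))
    _ = Nat.card {i : ZMod N // f i < f (i + 1) ∧
          f (i + (CircAux.gap h0 f i : ZMod N) + 1) < f (i + (CircAux.gap h0 f i : ZMod N))} :=
        CircAux.count_key (fun i => i + (CircAux.gap h0 f i : ZMod N))
          (fun i => f i ≠ f (i + 1)) (fun i => f (i + 1) < f i) (fun i => f i < f (i + 1))
          (fun i h => (ne_of_gt h)) (fun i h => (ne_of_lt h))
          (fun i h => ((lt_or_gt_of_ne h).elim Or.inr Or.inl))
          (fun i h => lt_asymm h.1 h.2)
          (fun i h => CircAux.gap_chg h0 f i h)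
          (fun i j hi hj hij => CircAux.sigma_inj h0 f i j hi hj hij)
    _ = Nat.card {s : ZMod N // ∃ k, MaxFlatC f s k} :=
        (Nat.card_congr (Equiv.subtypeEquiv (Equiv.subRight (1 : ZMod N))
          (fun s => CircAux.max_iff h0 f s))).symm
end

section
/- Let f : Fin N → L with N ≥ 1 on the linear domain. The number of connected components of the sublevel set {i | f i ≤ l} equals (number of flat local minima of f at levels ≤ l) minus (number of flat interior local maxima of f at levels ≤ l). -/
/-- A flat local minimum of `f` starting at `s` of length `k`: a run of `k`
consecutive equal values whose existing outer neighbors are strictly higher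
(boundary runs with a single existing strictly-higher neighbor also count). -/
def MinFlat {N : ℕ} {L : Type*} [LinearOrder L] (f : Fin N → L) (s : Fin N) (k : ℕ) : Prop :=
  0 < k ∧ s.val + k ≤ N ∧
  (∀ j : Fin N, s.val ≤ j.val → j.val < s.val + k → f j = f s) ∧
  (∀ j : Fin N, j.val + 1 = s.val → f s < f j) ∧
  (∀ j : Fin N, j.val = s.val + k → f s < f j)

/-- A flat interior local maximum of `f` starting at `s` of length `k`: a run of
`k` consecutive equal values away from the boundary of the domain, with both
outer neighbors strictly lower. -/
def IntMaxFlat {N : ℕ} {L : Type*} [LinearOrder L] (f : Fin N → L) (s : Fin N) (k : ℕ) : Prop :=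
  0 < k ∧ 0 < s.val ∧ s.val + k ≤ N - 1 ∧
  (∀ j : Fin N, s.val ≤ j.val → j.val < s.val + k → f j = f s) ∧
  (∀ j : Fin N, j.val + 1 = s.val → f j < f s) ∧
  (∀ j : Fin N, j.val = s.val + k → f j < f s)

namespace CompCount

set_option linter.unusedSectionVars false
set_option linter.unusedVariables false

variable {N : ℕ} {L : Type*} [LinearOrder L]

def gext (f : Fin N → L) (n : ℕ) : WithTop L :=
  if h : n < N then (f ⟨n, h⟩ : WithTop L) else ⊤

lemma gext_lt (f : Fin N → L) {n : ℕ} (h : n < N) : gext f n = (f ⟨n, h⟩ : WithTop L) := dif_pos h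

lemma gext_ge (f : Fin N → L) {n : ℕ} (h : N ≤ n) : gext f n = ⊤ := dif_neg (not_lt.2 h)

lemma exE (f : Fin N → L) (n : ℕ) : ∃ m, n < m ∧ (N ≤ m ∨ gext f m ≠ gext f n) := by
  classical
  refine ⟨n + N + 1, by omega, Or.inl (by omega)⟩

noncomputable def eIdx (f : Fin N → L) (n : ℕ) : ℕ := by
  classical exact Nat.find (exE f n)

lemma eIdx_gt (f : Fin N → L) (n : ℕ) : n < eIdx f n := by
  classical exact (Nat.find_spec (exE f n)).1

lemma eIdx_spec (f : Fin N → L) (n : ℕ) : N ≤ eIdx f n ∨ gext f (eIdx f n) ≠ gext f n := by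
  classical exact (Nat.find_spec (exE f n)).2

lemma eIdx_flat (f : Fin N → L) {n m : ℕ} (h1 : n ≤ m) (h2 : m < eIdx f n) :
    gext f m = gext f n := by
  classical
  rcases eq_or_lt_of_le h1 with rfl | h1'
  · rfl
  · have := Nat.find_min (exE f n) h2
    push_neg at this
    exact (this h1').2

lemma eIdx_le_N (f : Fin N → L) {n : ℕ} (hn : n < N) : eIdx f n ≤ N := by
  classical
  exact Nat.find_le ⟨hn, Or.inl le_rfl⟩

lemma eIdx_eq (f : Fin N → L) {n m : ℕ} (hn : n < N) (hnm : n < m)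
    (hflat : ∀ j, n ≤ j → j < m → gext f j = gext f n)
    (hend : N ≤ m ∨ gext f m ≠ gext f n) : eIdx f n = m := by
  classical
  refine le_antisymm (Nat.find_le ⟨hnm, hend⟩) ?_
  by_contra h
  push_neg at h
  rcases eIdx_spec f n with h' | h'
  · have h1 : gext f (eIdx f n) = gext f n := hflat _ (le_of_lt (eIdx_gt f n)) h
    rw [gext_ge f h', gext_lt f hn] at h1
    exact (WithTop.coe_ne_top (a := f ⟨n, hn⟩)) h1.symm
  · exact h' (hflat _ (le_of_lt (eIdx_gt f n)) h)

/-! ### Local predicates -/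

def inS (f : Fin N → L) (l : L) (n : ℕ) : Prop := gext f n ≤ (l : WithTop L)

def lH (f : Fin N → L) (n : ℕ) : Prop := n = 0 ∨ gext f n < gext f (n - 1)

def lL (f : Fin N → L) (n : ℕ) : Prop := 0 < n ∧ gext f (n - 1) < gext f n

noncomputable def rH (f : Fin N → L) (n : ℕ) : Prop := gext f n < gext f (eIdx f n)

noncomputable def rL (f : Fin N → L) (n : ℕ) : Prop := gext f (eIdx f n) < gext f n

def runStart (f : Fin N → L) (n : ℕ) : Prop := n = 0 ∨ gext f (n - 1) ≠ gext f n

lemma rL_lt_N (f : Fin N → L) {n : ℕ} (h : rL f n) : eIdx f n < N := by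
  by_contra h'
  rw [rL, gext_ge f (not_lt.1 h')] at h
  exact (not_top_lt h)

/-- Characterization of flat minima at level ≤ l. -/
lemma min_iff (f : Fin N → L) (l : L) (s : Fin N) :
    (∃ k, MinFlat f s k ∧ f s ≤ l) ↔ inS f l s.val ∧ lH f s.val ∧ rH f s.val := by
  have hgs : gext f s.val = (f s : WithTop L) := by rw [gext_lt f s.isLt]
  constructor
  · rintro ⟨k, ⟨hk, hkN, hflat, hleft, hright⟩, hfl⟩
    have he : eIdx f s.val = s.val + k := by
      refine eIdx_eq f s.isLt (by omega) ?_ ?_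
      · intro j hj1 hj2
        have hjN : j < N := by omega
        rw [gext_lt f hjN, hgs]
        exact_mod_cast hflat ⟨j, hjN⟩ hj1 hj2
      · rcases Nat.lt_or_ge (s.val + k) N with h | h
        · refine Or.inr ?_
          rw [gext_lt f h, hgs]
          exact_mod_cast (ne_of_gt (hright ⟨s.val + k, h⟩ rfl))
        · exact Or.inl h
    refine ⟨?_, ?_, ?_⟩
    · rw [inS, hgs]; exact_mod_cast hfl
    · rcases Nat.eq_zero_or_pos s.val with h | h
      · exact Or.inl h
      · refine Or.inr ?_
        have hjN : s.val - 1 < N := by omega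
        rw [gext_lt f hjN, hgs]
        exact_mod_cast hleft ⟨s.val - 1, hjN⟩ (show s.val - 1 + 1 = s.val by omega)
    · rw [rH, he]
      rcases Nat.lt_or_ge (s.val + k) N with h | h
      · rw [gext_lt f h, hgs]
        exact_mod_cast hright ⟨s.val + k, h⟩ rfl
      · rw [gext_ge f h, hgs]
        exact WithTop.coe_lt_top _
  · rintro ⟨hS, hlH, hrH⟩
    have hfl : f s ≤ l := by rw [inS, hgs] at hS; exact_mod_cast hS
    refine ⟨eIdx f s.val - s.val, ⟨?_, ?_, ?_, ?_, ?_⟩, hfl⟩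
    · have := eIdx_gt f s.val; omega
    · have := eIdx_le_N f s.isLt; omega
    · intro j hj1 hj2
      have : gext f j.val = gext f s.val := eIdx_flat f hj1 (by omega)
      rw [gext_lt f j.isLt, hgs] at this
      exact_mod_cast this
    · intro j hj
      rcases hlH with h | h
      · omega
      · rw [show s.val - 1 = j.val by omega, gext_lt f j.isLt, hgs] at h
        exact_mod_cast h
    · intro j hj
      have : j.val = eIdx f s.val := by have := eIdx_gt f s.val; omega
      rw [rH, ← this, gext_lt f j.isLt, hgs] at hrH
      exact_mod_cast hrH

/-- Characterization of flat interior maxima at level ≤ l. -/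
lemma max_iff (f : Fin N → L) (l : L) (s : Fin N) :
    (∃ k, IntMaxFlat f s k ∧ f s ≤ l) ↔ inS f l s.val ∧ lL f s.val ∧ rL f s.val := by
  have hgs : gext f s.val = (f s : WithTop L) := by rw [gext_lt f s.isLt]
  constructor
  · rintro ⟨k, ⟨hk, hs0, hkN, hflat, hleft, hright⟩, hfl⟩
    have hkN' : s.val + k < N := by have := s.isLt; omega
    have he : eIdx f s.val = s.val + k := by
      refine eIdx_eq f s.isLt (by omega) ?_ ?_
      · intro j hj1 hj2
        have hjN : j < N := by omega
        rw [gext_lt f hjN, hgs]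
        exact_mod_cast hflat ⟨j, hjN⟩ hj1 hj2
      · refine Or.inr ?_
        rw [gext_lt f hkN', hgs]
        exact_mod_cast (ne_of_lt (hright ⟨s.val + k, hkN'⟩ rfl))
    refine ⟨?_, ⟨hs0, ?_⟩, ?_⟩
    · rw [inS, hgs]; exact_mod_cast hfl
    · have hjN : s.val - 1 < N := by omega
      rw [gext_lt f hjN, hgs]
      exact_mod_cast hleft ⟨s.val - 1, hjN⟩ (show s.val - 1 + 1 = s.val by omega)
    · rw [rL, he, gext_lt f hkN', hgs]
      exact_mod_cast hright ⟨s.val + k, hkN'⟩ rfl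
  · rintro ⟨hS, ⟨hs0, hlL⟩, hrL⟩
    have hfl : f s ≤ l := by rw [inS, hgs] at hS; exact_mod_cast hS
    have heN : eIdx f s.val < N := rL_lt_N f hrL
    refine ⟨eIdx f s.val - s.val, ⟨?_, hs0, ?_, ?_, ?_, ?_⟩, hfl⟩
    · have := eIdx_gt f s.val; omega
    · omega
    · intro j hj1 hj2
      have : gext f j.val = gext f s.val := eIdx_flat f hj1 (by omega)
      rw [gext_lt f j.isLt, hgs] at this
      exact_mod_cast this
    · intro j hj
      rw [show s.val - 1 = j.val by omega, gext_lt f j.isLt, hgs] at hlL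
      exact_mod_cast hlL
    · intro j hj
      have hje : j.val = eIdx f s.val := by have := eIdx_gt f s.val; omega
      rw [rL, ← hje, gext_lt f j.isLt, hgs] at hrL
      exact_mod_cast hrL


/-! ### Counting sets -/

variable (f : Fin N → L) (l : L)

def AS : Set (Fin N) := {i | inS f l i.val ∧ lH f i.val}
def MinS : Set (Fin N) := {i | inS f l i.val ∧ lH f i.val ∧ rH f i.val}
def CS : Set (Fin N) := {i | inS f l i.val ∧ lH f i.val ∧ rL f i.val}
def RS : Set (Fin N) := {i | inS f l i.val ∧ runStart f i.val ∧ rL f i.val}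
def MaxS : Set (Fin N) := {i | inS f l i.val ∧ lL f i.val ∧ rL f i.val}
def BS : Set (Fin N) :=
  {i | 0 < i.val ∧ gext f (i.val - 1) ≤ (l : WithTop L) ∧ gext f i.val < gext f (i.val - 1)}
def ES : Set (Fin N) := {i | inS f l i.val ∧ (i.val = 0 ∨ ¬ inS f l (i.val - 1))}

variable {f l}

lemma inS_lt_N {n : ℕ} (h : inS f l n) : n < N := by
  by_contra h'
  rw [inS, gext_ge f (not_lt.1 h')] at h
  simp at h

lemma gext_ne_top {n : ℕ} (h : inS f l n) : gext f n ≠ ⊤ := by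
  intro h'
  rw [inS, h'] at h
  simp at h

lemma rH_iff_not_rL {n : ℕ} (h : inS f l n) : rH f n ↔ ¬ rL f n := by
  have hne : gext f (eIdx f n) ≠ gext f n := by
    rcases eIdx_spec f n with h' | h'
    · rw [gext_ge f h']
      exact fun h2 => (gext_ne_top h) h2.symm
    · exact h'
  constructor
  · intro h1 h2
    exact absurd (lt_trans h1 h2) (lt_irrefl _)
  · intro h1
    rcases lt_or_gt_of_ne hne with h2 | h2
    · exact absurd h2 h1
    · exact h2

lemma ncard_AS : (AS f l).ncard = (MinS f l).ncard + (CS f l).ncard := by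
  have : AS f l = MinS f l ∪ CS f l := by
    ext i
    simp only [AS, MinS, CS, Set.mem_setOf_eq, Set.mem_union]
    constructor
    · rintro ⟨h1, h2⟩
      by_cases h3 : rL f i.val
      · exact Or.inr ⟨h1, h2, h3⟩
      · exact Or.inl ⟨h1, h2, (rH_iff_not_rL h1).2 h3⟩
    · rintro (⟨h1, h2, _⟩ | ⟨h1, h2, _⟩) <;> exact ⟨h1, h2⟩
  rw [this, Set.ncard_union_eq ?_ (Set.toFinite _) (Set.toFinite _)]
  rw [Set.disjoint_left]
  rintro i ⟨h1, _, h3⟩ ⟨_, _, h4⟩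
  exact ((rH_iff_not_rL h1).1 h3) h4

lemma lH_or_lL_of_runStart {n : ℕ} (h : runStart f n) : lH f n ∨ lL f n := by
  rcases h with h | h
  · exact Or.inl (Or.inl h)
  · rcases Nat.eq_zero_or_pos n with h' | h'
    · exact Or.inl (Or.inl h')
    · rcases lt_or_gt_of_ne h with h2 | h2
      · exact Or.inr ⟨h', h2⟩
      · exact Or.inl (Or.inr h2)

lemma runStart_of_lH {n : ℕ} (h : lH f n) : runStart f n := by
  rcases h with h | h
  · exact Or.inl h
  · exact Or.inr (ne_of_gt h)

lemma runStart_of_lL {n : ℕ} (h : lL f n) : runStart f n :=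
  Or.inr (ne_of_lt h.2)

lemma not_lH_lL {n : ℕ} (h1 : lH f n) (h2 : lL f n) : False := by
  rcases h1 with h | h
  · have := h2.1; omega
  · exact absurd (lt_trans h h2.2) (lt_irrefl _)

lemma ncard_RS : (RS f l).ncard = (MaxS f l).ncard + (CS f l).ncard := by
  have : RS f l = MaxS f l ∪ CS f l := by
    ext i
    simp only [RS, MaxS, CS, Set.mem_setOf_eq, Set.mem_union]
    constructor
    · rintro ⟨h1, h2, h3⟩
      rcases lH_or_lL_of_runStart h2 with h | h
      · exact Or.inr ⟨h1, h, h3⟩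
      · exact Or.inl ⟨h1, h, h3⟩
    · rintro (⟨h1, h2, h3⟩ | ⟨h1, h2, h3⟩)
      · exact ⟨h1, runStart_of_lL h2, h3⟩
      · exact ⟨h1, runStart_of_lH h2, h3⟩
  rw [this, Set.ncard_union_eq ?_ (Set.toFinite _) (Set.toFinite _)]
  rw [Set.disjoint_left]
  rintro i ⟨_, h2, _⟩ ⟨_, h4, _⟩
  exact not_lH_lL h4 h2

lemma ncard_AS' : (AS f l).ncard = (ES f l).ncard + (BS f l).ncard := by
  have : AS f l = ES f l ∪ BS f l := by
    ext i
    simp only [AS, ES, BS, Set.mem_setOf_eq, Set.mem_union]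
    constructor
    · rintro ⟨h1, h2⟩
      rcases h2 with h | h
      · exact Or.inl ⟨h1, Or.inl h⟩
      · rcases Nat.eq_zero_or_pos i.val with h0 | h0
        · exact Or.inl ⟨h1, Or.inl h0⟩
        · by_cases h3 : inS f l (i.val - 1)
          · exact Or.inr ⟨h0, h3, h⟩
          · exact Or.inl ⟨h1, Or.inr h3⟩
    · rintro (⟨h1, h2⟩ | ⟨h1, h2, h3⟩)
      · refine ⟨h1, ?_⟩
        rcases h2 with h | h
        · exact Or.inl h
        · refine Or.inr (lt_of_le_of_lt h1 ?_)
          exact lt_of_not_ge h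
      · exact ⟨le_trans (le_of_lt h3) h2, Or.inr h3⟩
  rw [this, Set.ncard_union_eq ?_ (Set.toFinite _) (Set.toFinite _)]
  rw [Set.disjoint_left]
  rintro i ⟨h1, h2⟩ ⟨h3, h4, h5⟩
  rcases h2 with h | h
  · omega
  · exact h h4


/-! ### Bijection between runs with lower right end and descents -/

noncomputable def emap (f : Fin N → L) : Fin N → Fin N :=
  fun i => if h : eIdx f i.val < N then ⟨eIdx f i.val, h⟩ else i

lemma emap_val {i : Fin N} (h : rL f i.val) : (emap f i).val = eIdx f i.val := by
  rw [emap, dif_pos (rL_lt_N f h)]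

lemma image_emap : emap f '' RS f l = BS f l := by
  apply Set.Subset.antisymm
  · rintro b ⟨i, ⟨hS, hrs, hrl⟩, rfl⟩
    have heN := rL_lt_N f hrl
    have hgt := eIdx_gt f i.val
    have hval := emap_val (f := f) hrl
    have hflat : gext f (eIdx f i.val - 1) = gext f i.val :=
      eIdx_flat f (by omega) (by omega)
    refine ⟨by omega, ?_, ?_⟩
    · rw [hval, hflat]; exact hS
    · rw [hval, hflat]; exact hrl
  · rintro b ⟨h0, hle, hlt⟩
    set n := b.val with hn
    have hnN : n < N := b.isLt
    have hex : ∃ t, ∀ j, t ≤ j → j ≤ n - 1 → gext f j = gext f (n - 1) := by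
      refine ⟨n - 1, fun j h1 h2 => ?_⟩
      rw [le_antisymm h2 h1]
    classical
    set t := Nat.find hex with htdef
    have ht : ∀ j, t ≤ j → j ≤ n - 1 → gext f j = gext f (n - 1) := Nat.find_spec hex
    have htle : t ≤ n - 1 := Nat.find_le (fun j h1 h2 => by rw [le_antisymm h2 h1])
    have hgt_eq : gext f t = gext f (n - 1) := ht t le_rfl htle
    have htN : t < N := by omega
    have hrs : runStart f t := by
      rcases Nat.eq_zero_or_pos t with h | h
      · exact Or.inl h
      · refine Or.inr ?_
        have hne : ¬ ∀ j, t - 1 ≤ j → j ≤ n - 1 → gext f j = gext f (n - 1) :=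
          Nat.find_min hex (by omega)
        push_neg at hne
        obtain ⟨j, hj1, hj2, hj3⟩ := hne
        have hj : j = t - 1 := by
          by_contra h'
          exact hj3 (ht j (by omega) hj2)
        rw [hj] at hj3
        rw [hgt_eq]
        exact hj3
    have heq : eIdx f t = n := by
      refine eIdx_eq f htN (by omega) ?_ (Or.inr ?_)
      · intro j hj1 hj2
        rw [ht j hj1 (by omega), hgt_eq]
      · rw [hgt_eq]
        exact ne_of_lt hlt
    have hrl : rL f t := by
      rw [rL, heq, hgt_eq]
      exact hlt
    refine ⟨⟨t, htN⟩, ⟨?_, hrs, hrl⟩, ?_⟩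
    · rw [inS, hgt_eq]; exact hle
    · apply Fin.ext
      rw [emap_val (f := f) hrl, heq]
  
lemma injOn_emap : Set.InjOn (emap f) (RS f l) := by
  have key : ∀ i1 i2 : Fin N, i1 ∈ RS f l → i2 ∈ RS f l → emap f i1 = emap f i2 →
      i1.val < i2.val → False := by
    rintro i1 i2 ⟨_, _, hrl1⟩ ⟨_, hrs2, hrl2⟩ heq hlt
    have hv : eIdx f i1.val = eIdx f i2.val := by
      have := emap_val (f := f) hrl1
      have := emap_val (f := f) hrl2
      rw [heq] at *
      omega
    have hgt2 := eIdx_gt f i2.val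
    have h1 : gext f (i2.val - 1) = gext f i1.val :=
      eIdx_flat f (by omega) (by omega)
    have h2 : gext f i2.val = gext f i1.val :=
      eIdx_flat f (by omega) (by omega)
    rcases hrs2 with h | h
    · omega
    · exact h (h1.trans h2.symm)
  intro i1 h1 i2 h2 heq
  rcases lt_trichotomy i1.val i2.val with h | h | h
  · exact absurd (key i1 i2 h1 h2 heq h) not_false
  · exact Fin.ext h
  · exact absurd (key i2 i1 h2 h1 heq.symm h) not_false

lemma ncard_RS_BS : (RS f l).ncard = (BS f l).ncard := by
  rw [← image_emap (f := f) (l := l), Set.ncard_image_of_injOn injOn_emap]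

lemma ncard_main : (MinS f l).ncard = (ES f l).ncard + (MaxS f l).ncard := by
  have h1 := ncard_AS (f := f) (l := l)
  have h2 := ncard_AS' (f := f) (l := l)
  have h3 := ncard_RS (f := f) (l := l)
  have h4 := ncard_RS_BS (f := f) (l := l)
  omega


/-! ### Components -/

lemma conn_symm {S : Set (Fin N)} {a b : Fin N} (h : ConnectedIn S a b) : ConnectedIn S b a := by
  have hs : ∀ x y, AdjStep S x y → AdjStep S y x := by
    rintro x y ⟨h1, h2, h3⟩
    exact ⟨h2, h1, h3.symm⟩
  induction h with
  | refl => exact Relation.ReflTransGen.refl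
  | tail _ hbc ih => exact Relation.ReflTransGen.head (hs _ _ hbc) ih

lemma conn_interval {S : Set (Fin N)} {a b : Fin N} (ha : a ∈ S) (h : ConnectedIn S a b) :
    b ∈ S ∧ ∀ c : Fin N, min a.val b.val ≤ c.val → c.val ≤ max a.val b.val → c ∈ S := by
  induction h with
  | refl =>
    exact ⟨ha, fun c h1 h2 => by
      have : c = a := Fin.ext (by omega)
      rwa [this]⟩
  | @tail b' b h1 h2 ih =>
    obtain ⟨hb', hint⟩ := ih
    obtain ⟨_, hb, hadj⟩ := h2
    refine ⟨hb, fun c h1' h2' => ?_⟩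
    by_cases hc : c.val = b.val
    · rwa [Fin.ext hc]
    · refine hint c ?_ ?_ <;> omega

lemma conn_of_interval {S : Set (Fin N)} :
    ∀ (d : ℕ) (a b : Fin N), b.val = a.val + d →
      (∀ c : Fin N, a.val ≤ c.val → c.val ≤ b.val → c ∈ S) → ConnectedIn S a b := by
  intro d
  induction d with
  | zero =>
    intro a b hab _
    have : a = b := Fin.ext (by omega)
    rw [← this]
    exact Relation.ReflTransGen.refl
  | succ d ih =>
    intro a b hab hint
    have haN : a.val + 1 < N := by have := b.isLt; omega
    set a' : Fin N := ⟨a.val + 1, haN⟩ with ha'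
    refine Relation.ReflTransGen.head ⟨?_, ?_, Or.inl rfl⟩ (ih a' b (by simp [ha']; omega) ?_)
    · exact hint a le_rfl (by omega)
    · exact hint a' (by simp [ha']) (by simp [ha']; omega)
    · intro c h1 h2
      refine hint c ?_ h2
      simp [ha'] at h1
      omega

lemma mem_S_iff {i : Fin N} : f i ≤ l ↔ inS f l i.val := by
  rw [inS, gext_lt f i.isLt]
  exact_mod_cast Iff.rfl

lemma components_eq :
    {C : Set (Fin N) | IsConnComp {i | f i ≤ l} C} =
      (fun a => {b | ConnectedIn {i | f i ≤ l} a b}) '' (ES f l) := by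
  set S : Set (Fin N) := {i | f i ≤ l} with hSdef
  apply Set.Subset.antisymm
  · rintro C ⟨a₀, ha₀, rfl⟩
    have hin : inS f l a₀.val := mem_S_iff.1 ha₀
    have hex : ∃ t, ∀ j, t ≤ j → j ≤ a₀.val → inS f l j := by
      refine ⟨a₀.val, fun j h1 h2 => ?_⟩
      rwa [le_antisymm h2 h1]
    classical
    set t := Nat.find hex with htdef
    have ht : ∀ j, t ≤ j → j ≤ a₀.val → inS f l j := Nat.find_spec hex
    have htle : t ≤ a₀.val := Nat.find_le (fun j h1 h2 => by rwa [le_antisymm h2 h1])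
    have htN : t < N := by have := a₀.isLt; omega
    have htS : inS f l t := ht t le_rfl htle
    have htE : (⟨t, htN⟩ : Fin N) ∈ ES f l := by
      refine ⟨htS, ?_⟩
      rcases Nat.eq_zero_or_pos t with h | h
      · exact Or.inl h
      · refine Or.inr ?_
        have hne : ¬ ∀ j, t - 1 ≤ j → j ≤ a₀.val → inS f l j := Nat.find_min hex (by omega)
        push_neg at hne
        obtain ⟨j, hj1, hj2, hj3⟩ := hne
        have : j = t - 1 := by
          by_contra h'
          exact hj3 (ht j (by omega) hj2)
        rwa [← this]
    have hconn : ConnectedIn S ⟨t, htN⟩ a₀ := by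
      refine conn_of_interval (a₀.val - t) ⟨t, htN⟩ a₀ (by simp; omega) ?_
      intro c h1 h2
      simp only [hSdef, Set.mem_setOf_eq, mem_S_iff]
      exact ht c.val (by simpa using h1) h2
    refine ⟨⟨t, htN⟩, htE, ?_⟩
    ext b
    simp only [Set.mem_setOf_eq]
    constructor
    · exact fun h => Relation.ReflTransGen.trans (conn_symm hconn) h
    · exact fun h => Relation.ReflTransGen.trans hconn h
  · rintro C ⟨a, ha, rfl⟩
    exact ⟨a, mem_S_iff.2 ha.1, rfl⟩

lemma injOn_components :
    Set.InjOn (fun a => {b | ConnectedIn {i | f i ≤ l} a b}) (ES f l) := by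
  set S : Set (Fin N) := {i | f i ≤ l} with hSdef
  have key : ∀ a b : Fin N, a ∈ ES f l → b ∈ ES f l →
      {x | ConnectedIn S a x} = {x | ConnectedIn S b x} → a.val < b.val → False := by
    rintro a b ⟨haS, _⟩ ⟨hbS, hbE⟩ heq hab
    have hconn : ConnectedIn S a b := by
      have : b ∈ {x | ConnectedIn S b x} := Relation.ReflTransGen.refl
      rw [← heq] at this
      exact this
    have haS' : a ∈ S := by
      simp only [hSdef, Set.mem_setOf_eq, mem_S_iff]
      exact haS
    have hint := (conn_interval haS' hconn).2
    have hc : (⟨b.val - 1, by omega⟩ : Fin N) ∈ S := by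
      have h1 : min a.val b.val ≤ b.val - 1 := by omega
      have h2 : b.val - 1 ≤ max a.val b.val := by omega
      exact hint ⟨b.val - 1, by omega⟩ h1 h2
    rcases hbE with h | h
    · omega
    · refine h ?_
      have := mem_S_iff.1 hc
      simpa using this
  intro a ha b hb heq
  simp only at heq
  rcases lt_trichotomy a.val b.val with h | h | h
  · exact absurd (key a b ha hb heq h) not_false
  · exact Fin.ext h
  · exact absurd (key b a hb ha heq.symm h) not_false

lemma ncard_components :
    {C : Set (Fin N) | IsConnComp {i | f i ≤ l} C}.ncard = (ES f l).ncard := by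
  rw [components_eq, Set.ncard_image_of_injOn injOn_components]

end CompCount

theorem component_count_eq_minima_sub_interior_maxima {N : ℕ} {L : Type*}
    [LinearOrder L] (hN : 1 ≤ N) (f : Fin N → L) (l : L) :
    {C : Set (Fin N) | IsConnComp {i | f i ≤ l} C}.ncard =
      Nat.card {s : Fin N // ∃ k, MinFlat f s k ∧ f s ≤ l} -
      Nat.card {s : Fin N // ∃ k, IntMaxFlat f s k ∧ f s ≤ l} := by
  classical
  have hmin : Nat.card {s : Fin N // ∃ k, MinFlat f s k ∧ f s ≤ l}
      = (CompCount.MinS f l).ncard := by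
    have h1 : {s : Fin N | ∃ k, MinFlat f s k ∧ f s ≤ l} = CompCount.MinS f l := by
      ext s
      rw [Set.mem_setOf_eq, CompCount.min_iff]
      rfl
    rw [← h1, ← Nat.card_coe_set_eq]
    rfl
  have hmax : Nat.card {s : Fin N // ∃ k, IntMaxFlat f s k ∧ f s ≤ l}
      = (CompCount.MaxS f l).ncard := by
    have h1 : {s : Fin N | ∃ k, IntMaxFlat f s k ∧ f s ≤ l} = CompCount.MaxS f l := by
      ext s
      rw [Set.mem_setOf_eq, CompCount.max_iff]
      rfl
    rw [← h1, ← Nat.card_coe_set_eq]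
    rfl
  rw [hmin, hmax, CompCount.ncard_components (f := f) (l := l)]
  have := CompCount.ncard_main (f := f) (l := l)
  omega
end

section
/- Let f : Fin N → L on the linear domain with N ≥ 1. The number of local minima of f minus the number of interior local maxima of f equals 1. -/
set_option maxHeartbeats 1600000
set_option linter.unusedSectionVars false


namespace NumMinAux

variable {L : Type*} [LinearOrder L]

def MinS {N : ℕ} (f : Fin N → L) : Set (Fin N) := {s | ∃ k, MinFlat f s k}
def MaxS {N : ℕ} (f : Fin N → L) : Set (Fin N) := {s | ∃ k, IntMaxFlat f s k}

section Transfer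

variable {N : ℕ} {f : Fin (N + 2) → L}

lemma csk' (j : Fin (N + 2)) (hj : j.val < N + 1) :
    Fin.castSucc (⟨j.val, hj⟩ : Fin (N + 1)) = j := Fin.ext rfl

lemma up_min {s : Fin (N + 1)} {k : ℕ}
    (h : MinFlat (fun i : Fin (N + 1) => f i.castSucc) s k)
    (hend : s.val + k = N + 1 → f s.castSucc < f (Fin.last (N + 1))) :
    MinFlat f s.castSucc k := by
  obtain ⟨hk0, hkN, hflat, hleft, hright⟩ := h
  refine ⟨hk0, by simp only [Fin.coe_castSucc]; omega, ?_, ?_, ?_⟩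
  · intro j h1 h2
    simp only [Fin.coe_castSucc] at h1 h2
    have hj : j.val < N + 1 := by omega
    have := hflat ⟨j.val, hj⟩ h1 h2
    simpa only [csk' j hj] using this
  · intro j hj
    simp only [Fin.coe_castSucc] at hj
    have hj2 : j.val < N + 1 := by omega
    have := hleft ⟨j.val, hj2⟩ hj
    simpa only [csk' j hj2] using this
  · intro j hj
    simp only [Fin.coe_castSucc] at hj
    rcases Nat.lt_or_ge j.val (N + 1) with hlt | hge
    · have := hright ⟨j.val, hlt⟩ hj
      simpa only [csk' j hlt] using this
    · have hJ := j.isLt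
      have hj1 : j.val = N + 1 := by omega
      rw [show j = Fin.last (N + 1) from Fin.ext (by simp [Fin.val_last, hj1])]
      exact hend (by omega)

lemma down_min {s : Fin (N + 1)} {k : ℕ} (h : MinFlat f s.castSucc k)
    (hk : s.val + k ≤ N + 1) :
    MinFlat (fun i : Fin (N + 1) => f i.castSucc) s k := by
  obtain ⟨hk0, _, hflat, hleft, hright⟩ := h
  refine ⟨hk0, hk, ?_, ?_, ?_⟩
  · intro j h1 h2
    exact hflat j.castSucc (by simp only [Fin.coe_castSucc]; omega)
      (by simp only [Fin.coe_castSucc]; omega)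
  · intro j hj
    exact hleft j.castSucc (by simp only [Fin.coe_castSucc]; omega)
  · intro j hj
    exact hright j.castSucc (by simp only [Fin.coe_castSucc]; omega)

lemma up_max {s : Fin (N + 1)} {k : ℕ}
    (h : IntMaxFlat (fun i : Fin (N + 1) => f i.castSucc) s k) :
    IntMaxFlat f s.castSucc k := by
  obtain ⟨hk0, hs0, hkN, hflat, hleft, hright⟩ := h
  have hkN' : s.val + k ≤ N := by omega
  refine ⟨hk0, by simp only [Fin.coe_castSucc]; omega,
    by simp only [Fin.coe_castSucc]; omega, ?_, ?_, ?_⟩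
  · intro j h1 h2
    simp only [Fin.coe_castSucc] at h1 h2
    have hj : j.val < N + 1 := by omega
    have := hflat ⟨j.val, hj⟩ h1 h2
    simpa only [csk' j hj] using this
  · intro j hj
    simp only [Fin.coe_castSucc] at hj
    have hj2 : j.val < N + 1 := by omega
    have := hleft ⟨j.val, hj2⟩ hj
    simpa only [csk' j hj2] using this
  · intro j hj
    simp only [Fin.coe_castSucc] at hj
    have hj2 : j.val < N + 1 := by omega
    have := hright ⟨j.val, hj2⟩ hj
    simpa only [csk' j hj2] using this

lemma down_max {s : Fin (N + 1)} {k : ℕ} (h : IntMaxFlat f s.castSucc k)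
    (hk : s.val + k ≤ N) :
    IntMaxFlat (fun i : Fin (N + 1) => f i.castSucc) s k := by
  obtain ⟨hk0, hs0, _, hflat, hleft, hright⟩ := h
  refine ⟨hk0, by simp only [Fin.coe_castSucc] at hs0; omega, by omega, ?_, ?_, ?_⟩
  · intro j h1 h2
    exact hflat j.castSucc (by simp only [Fin.coe_castSucc]; omega)
      (by simp only [Fin.coe_castSucc]; omega)
  · intro j hj
    exact hleft j.castSucc (by simp only [Fin.coe_castSucc]; omega)
  · intro j hj
    exact hright j.castSucc (by simp only [Fin.coe_castSucc]; omega)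

end Transfer

end NumMinAux
section Cases

variable {L : Type*} [LinearOrder L] {N : ℕ} {f : Fin (N + 2) → L}

open NumMinAux

lemma caseAB_min (hab : f (⟨N, by omega⟩ : Fin (N + 2)) ≤ f (Fin.last (N + 1))) :
    MinS f = Fin.castSucc '' MinS (fun i : Fin (N + 1) => f i.castSucc) := by
  ext s'
  simp only [MinS, Set.mem_setOf_eq, Set.mem_image]
  constructor
  · rintro ⟨k, h⟩
    have hk0 := h.1
    have hks := h.2.1
    have hs' : s'.val ≤ N := by
      by_contra hc
      have hv : s'.val = N + 1 := by have := s'.isLt; omega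
      have hb : f s' = f (Fin.last (N + 1)) := by
        rw [show s' = Fin.last (N + 1) from Fin.ext hv]
      have hlt := h.2.2.2.1 ⟨N, by omega⟩ (by simpa using hv.symm)
      rw [hb] at hlt
      exact absurd hlt (not_lt.mpr hab)
    set s : Fin (N + 1) := ⟨s'.val, by omega⟩ with hsdef
    have hcs : s.castSucc = s' := Fin.ext rfl
    have hsval : s.val = s'.val := rfl
    refine ⟨s, ?_, hcs⟩
    rw [← hcs] at h
    rcases Nat.lt_or_ge (s'.val + k) (N + 2) with hlt | hge
    · exact ⟨k, down_min h (by omega)⟩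
    · have hvk : s'.val + k = N + 2 := by omega
      refine ⟨k - 1, by omega, by omega, ?_, ?_, ?_⟩
      · intro j h1 h2
        exact h.2.2.1 j.castSucc (by simp only [Fin.coe_castSucc]; omega)
          (by simp only [Fin.coe_castSucc]; omega)
      · intro j hj
        exact h.2.2.2.1 j.castSucc (by simp only [Fin.coe_castSucc]; omega)
      · intro j hj
        exact absurd hj (by have := j.isLt; omega)
  · rintro ⟨s, ⟨k, h⟩, rfl⟩
    have hkN : s.val + k ≤ N + 1 := h.2.1
    rcases Nat.lt_or_ge (s.val + k) (N + 1) with hlt | hge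
    · exact ⟨k, up_min h (fun he => absurd he (by omega))⟩
    · have heq : s.val + k = N + 1 := by omega
      have hA : (fun i : Fin (N + 1) => f i.castSucc) (Fin.last N) =
          (fun i : Fin (N + 1) => f i.castSucc) s :=
        h.2.2.1 (Fin.last N) (by simp only [Fin.val_last]; omega)
          (by simp only [Fin.val_last]; omega)
      have hA' : f (⟨N, by omega⟩ : Fin (N + 2)) = f s.castSucc := by
        have e : (Fin.last N).castSucc = (⟨N, by omega⟩ : Fin (N + 2)) := Fin.ext rfl
        simpa only [e] using hA
      rcases eq_or_lt_of_le hab with hEq | hLt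
      · refine ⟨k + 1, by omega, by simp only [Fin.coe_castSucc]; omega, ?_, ?_, ?_⟩
        · intro j h1 h2
          simp only [Fin.coe_castSucc] at h1 h2
          rcases Nat.lt_or_ge j.val (s.val + k) with hl | hg
          · have hj : j.val < N + 1 := by omega
            have := h.2.2.1 ⟨j.val, hj⟩ h1 hl
            simpa only [csk' j hj] using this
          · have hj : j.val = N + 1 := by have := j.isLt; omega
            rw [show j = Fin.last (N + 1) from Fin.ext (by simp [hj])]
            rw [← hEq]
            exact hA'
        · intro j hj
          simp only [Fin.coe_castSucc] at hj
          have hj2 : j.val < N + 1 := by omega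
          have := h.2.2.2.1 ⟨j.val, hj2⟩ hj
          simpa only [csk' j hj2] using this
        · intro j hj
          simp only [Fin.coe_castSucc] at hj
          exact absurd hj (by have := j.isLt; omega)
      · exact ⟨k, up_min h (fun _ => by rw [← hA']; exact hLt)⟩

lemma caseAB_max (hab : f (⟨N, by omega⟩ : Fin (N + 2)) ≤ f (Fin.last (N + 1))) :
    MaxS f = Fin.castSucc '' MaxS (fun i : Fin (N + 1) => f i.castSucc) := by
  ext s'
  simp only [MaxS, Set.mem_setOf_eq, Set.mem_image]
  constructor
  · rintro ⟨k, h⟩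
    have hk0 := h.1
    have hbd : s'.val + k ≤ N + 1 := by have := h.2.2.1; omega
    have hs' : s'.val ≤ N := by omega
    set s : Fin (N + 1) := ⟨s'.val, by omega⟩ with hsdef
    have hcs : s.castSucc = s' := Fin.ext rfl
    have hsval : s.val = s'.val := rfl
    rw [← hcs] at h
    refine ⟨s, ⟨k, down_max h ?_⟩, hcs⟩
    rcases Nat.lt_or_ge (s'.val + k) (N + 1) with hlt | hge
    · omega
    · exfalso
      have heq : s'.val + k = N + 1 := by omega
      have hA : f (⟨N, by omega⟩ : Fin (N + 2)) = f s.castSucc :=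
        h.2.2.2.1 ⟨N, by omega⟩ (by simp only [Fin.coe_castSucc]; omega)
          (by simp only [Fin.coe_castSucc]; omega)
      have hB := h.2.2.2.2.2 (Fin.last (N + 1))
        (by simp only [Fin.val_last, Fin.coe_castSucc]; omega)
      rw [← hA] at hB
      exact absurd hB (not_lt.mpr hab)
  · rintro ⟨s, ⟨k, h⟩, rfl⟩
    exact ⟨k, up_max h⟩

end Cases
section CaseC

variable {L : Type*} [LinearOrder L] {N : ℕ} {f : Fin (N + 2) → L}

open NumMinAux

lemma last_notmem (S : Set (Fin (N + 1))) :
    Fin.last (N + 1) ∉ Fin.castSucc '' S := by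
  rintro ⟨x, -, hx⟩
  have := congrArg Fin.val hx
  simp only [Fin.coe_castSucc, Fin.val_last] at this
  exact absurd this (by have := x.isLt; omega)

section C1

variable (htail : ∀ j : Fin (N + 1), f j.castSucc = f (⟨N, by omega⟩ : Fin (N + 2)))

include htail

omit [LinearOrder L] in
lemma hval0 : ∀ j : Fin (N + 2), j.val ≤ N → f j = f (⟨N, by omega⟩ : Fin (N + 2)) := by
  intro j hj
  rw [← csk' j (by omega)]
  exact htail ⟨j.val, by omega⟩

lemma caseC1_min (hab : f (Fin.last (N + 1)) < f (⟨N, by omega⟩ : Fin (N + 2))) :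
    MinS f = {Fin.last (N + 1)} := by
  have hval := hval0 htail
  ext s'
  simp only [MinS, Set.mem_setOf_eq, Set.mem_singleton_iff]
  constructor
  · rintro ⟨k, h⟩
    by_contra hne
    have hs' : s'.val ≤ N := by
      rcases Nat.lt_or_ge s'.val (N + 1) with h1 | h2
      · omega
      · exact absurd (Fin.ext (by simp only [Fin.val_last]; have := s'.isLt; omega) :
          s' = Fin.last (N + 1)) hne
    have hfs : f s' = f (⟨N, by omega⟩ : Fin (N + 2)) := hval s' hs'
    rcases Nat.eq_zero_or_pos s'.val with h0 | hpos
    · have hks := h.2.1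
      rcases Nat.lt_or_ge (s'.val + k) (N + 1) with hk1 | hk2
      · have hr : f s' < f (⟨s'.val + k, by omega⟩ : Fin (N + 2)) :=
          h.2.2.2.2 ⟨s'.val + k, by omega⟩ rfl
        rw [hfs, hval ⟨s'.val + k, by omega⟩ (by show s'.val + k ≤ N; omega)] at hr
        exact lt_irrefl _ hr
      · rcases Nat.lt_or_ge (s'.val + k) (N + 2) with hk3 | hk4
        · have hr : f s' < f (Fin.last (N + 1)) :=
            h.2.2.2.2 (Fin.last (N + 1)) (by simp only [Fin.val_last]; omega)
          rw [hfs] at hr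
          exact absurd hr (not_lt.mpr hab.le)
        · have hr : f (Fin.last (N + 1)) = f s' :=
            h.2.2.1 (Fin.last (N + 1)) (by simp only [Fin.val_last]; omega)
              (by simp only [Fin.val_last]; omega)
          rw [hfs] at hr
          exact absurd hr (ne_of_lt hab)
    · have hl : f s' < f (⟨s'.val - 1, by omega⟩ : Fin (N + 2)) :=
        h.2.2.2.1 ⟨s'.val - 1, by omega⟩ (by show s'.val - 1 + 1 = s'.val; omega)
      rw [hfs, hval ⟨s'.val - 1, by omega⟩ (by show s'.val - 1 ≤ N; omega)] at hl
      exact lt_irrefl _ hl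
  · rintro rfl
    refine ⟨1, one_pos, by simp only [Fin.val_last]; omega, ?_, ?_, ?_⟩
    · intro j h1 h2
      simp only [Fin.val_last] at h1 h2
      rw [show j = Fin.last (N + 1) from Fin.ext
        (by simp only [Fin.val_last]; have := j.isLt; omega)]
    · intro j hj
      simp only [Fin.val_last] at hj
      rw [hval j (by omega)]
      exact hab
    · intro j hj
      simp only [Fin.val_last] at hj
      exact absurd hj (by have := j.isLt; omega)

lemma caseC1_max : MaxS f = (∅ : Set (Fin (N + 2))) := by
  have hval := hval0 htail
  ext s'
  simp only [MaxS, Set.mem_setOf_eq, Set.mem_empty_iff_false, iff_false]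
  rintro ⟨k, h⟩
  have h0 : 0 < s'.val := h.2.1
  have hbd : s'.val + k ≤ N + 1 := by have := h.2.2.1; omega
  have hk0 := h.1
  have hfs : f s' = f (⟨N, by omega⟩ : Fin (N + 2)) := hval s' (by omega)
  have hl : f (⟨s'.val - 1, by omega⟩ : Fin (N + 2)) < f s' :=
    h.2.2.2.2.1 ⟨s'.val - 1, by omega⟩ (by show s'.val - 1 + 1 = s'.val; omega)
  rw [hfs, hval ⟨s'.val - 1, by omega⟩ (by show s'.val - 1 ≤ N; omega)] at hl
  exact lt_irrefl _ hl

end C1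

end CaseC
section C23

variable {L : Type*} [LinearOrder L] {N : ℕ} {f : Fin (N + 2) → L}

open NumMinAux

/-- bound for a min flat of `f` not starting at the last index, given the last
value is strictly below the previous one. -/
lemma min_bound (hab : f (Fin.last (N + 1)) < f (⟨N, by omega⟩ : Fin (N + 2)))
    {s' : Fin (N + 2)} {k : ℕ} (hs' : s'.val ≤ N) (h : MinFlat f s' k) :
    s'.val + k ≤ N := by
  have hk0 := h.1
  have hks := h.2.1
  by_contra hc
  have hfs : f (⟨N, by omega⟩ : Fin (N + 2)) = f s' :=
    h.2.2.1 ⟨N, by omega⟩ (by show s'.val ≤ N; omega) (by show (N : ℕ) < s'.val + k; omega)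
  rcases Nat.lt_or_ge (s'.val + k) (N + 2) with hc1 | hc2
  · have hr : f s' < f (Fin.last (N + 1)) :=
      h.2.2.2.2 (Fin.last (N + 1)) (by simp only [Fin.val_last]; omega)
    rw [← hfs] at hr
    exact absurd hr (not_lt.mpr hab.le)
  · have hr : f (Fin.last (N + 1)) = f s' :=
      h.2.2.1 (Fin.last (N + 1)) (by simp only [Fin.val_last]; omega)
        (by simp only [Fin.val_last]; omega)
    rw [← hfs] at hr
    exact absurd hr (ne_of_lt hab)


variable {s0 : ℕ} (h0 : 0 < s0) (hsN : s0 ≤ N)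
  (htail : ∀ j : Fin (N + 1), s0 ≤ j.val → f j.castSucc = f (⟨N, by omega⟩ : Fin (N + 2)))

omit [LinearOrder L] in
include htail in
lemma hvalt : ∀ j : Fin (N + 2), s0 ≤ j.val → j.val ≤ N →
    f j = f (⟨N, by omega⟩ : Fin (N + 2)) := by
  intro j h1 h2
  rw [← csk' j (by omega)]
  exact htail ⟨j.val, by omega⟩ h1

include h0 hsN htail in
/-- a max flat of `f` whose run reaches the last inner index must start at `s0`. -/
lemma max_end (hprevne : f (⟨s0 - 1, by omega⟩ : Fin (N + 2)) ≠ f (⟨N, by omega⟩ : Fin (N + 2)))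
    {s' : Fin (N + 2)} {k : ℕ} (h : IntMaxFlat f s' k) (he : s'.val + k = N + 1) :
    s'.val = s0 ∧ f (⟨s0 - 1, by omega⟩ : Fin (N + 2)) < f (⟨N, by omega⟩ : Fin (N + 2)) := by
  have hv := hvalt htail
  have hk0 := h.1
  have hs' : s'.val ≤ N := by omega
  have hfs : f (⟨N, by omega⟩ : Fin (N + 2)) = f s' :=
    h.2.2.2.1 ⟨N, by omega⟩ (by show s'.val ≤ N; omega) (by show (N : ℕ) < s'.val + k; omega)
  have hvs : s'.val = s0 := by
    rcases Nat.lt_trichotomy s'.val s0 with hl | heq | hg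
    · exfalso
      have hflat : f (⟨s0 - 1, by omega⟩ : Fin (N + 2)) = f s' :=
        h.2.2.2.1 ⟨s0 - 1, by omega⟩ (by show s'.val ≤ s0 - 1; omega)
          (by show s0 - 1 < s'.val + k; omega)
      exact hprevne (hflat.trans hfs.symm)
    · exact heq
    · exfalso
      have hleft : f (⟨s'.val - 1, by omega⟩ : Fin (N + 2)) < f s' :=
        h.2.2.2.2.1 ⟨s'.val - 1, by omega⟩ (by show s'.val - 1 + 1 = s'.val; omega)
      rw [← hfs, hv ⟨s'.val - 1, by omega⟩ (by show s0 ≤ s'.val - 1; omega)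
        (by show s'.val - 1 ≤ N; omega)] at hleft
      exact lt_irrefl _ hleft
  refine ⟨hvs, ?_⟩
  have hleft : f (⟨s0 - 1, by omega⟩ : Fin (N + 2)) < f s' :=
    h.2.2.2.2.1 ⟨s0 - 1, by omega⟩ (by show s0 - 1 + 1 = s'.val; omega)
  rw [← hfs] at hleft
  exact hleft

include h0 hsN htail in
/-- a min flat of `g` whose run reaches the last index of `g` must start at `s0`,
and the value left of `s0` is above the tail value. -/
lemma ming_end (hprevne : f (⟨s0 - 1, by omega⟩ : Fin (N + 2)) ≠ f (⟨N, by omega⟩ : Fin (N + 2)))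
    {s : Fin (N + 1)} {k : ℕ}
    (h : MinFlat (fun i : Fin (N + 1) => f i.castSucc) s k) (he : s.val + k = N + 1) :
    s.val = s0 ∧ f (⟨N, by omega⟩ : Fin (N + 2)) < f (⟨s0 - 1, by omega⟩ : Fin (N + 2)) := by
  have hv := hvalt htail
  have hk0 := h.1
  have hs : s.val ≤ N := by omega
  have hfs : f (⟨N, by omega⟩ : Fin (N + 2)) = f s.castSucc := by
    have h1 : f (Fin.last N).castSucc = f s.castSucc :=
      h.2.2.1 (Fin.last N) (by show s.val ≤ N; omega) (by show (N : ℕ) < s.val + k; omega)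
    rw [← h1]
    exact congrArg f (Fin.ext rfl)
  have hvs : s.val = s0 := by
    rcases Nat.lt_trichotomy s.val s0 with hl | heq | hg
    · exfalso
      have hflat : f (⟨s0 - 1, by omega⟩ : Fin (N + 1)).castSucc = f s.castSucc :=
        h.2.2.1 ⟨s0 - 1, by omega⟩ (by show s.val ≤ s0 - 1; omega)
          (by show s0 - 1 < s.val + k; omega)
      have e : (⟨s0 - 1, by omega⟩ : Fin (N + 1)).castSucc =
          (⟨s0 - 1, by omega⟩ : Fin (N + 2)) := Fin.ext rfl
      rw [e] at hflat
      exact hprevne (hflat.trans hfs.symm)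
    · exact heq
    · exfalso
      have hleft : f s.castSucc < f (⟨s.val - 1, by omega⟩ : Fin (N + 1)).castSucc :=
        h.2.2.2.1 ⟨s.val - 1, by omega⟩ (by show s.val - 1 + 1 = s.val; omega)
      have e : (⟨s.val - 1, by omega⟩ : Fin (N + 1)).castSucc =
          (⟨s.val - 1, by omega⟩ : Fin (N + 2)) := Fin.ext rfl
      rw [e, ← hfs, hv ⟨s.val - 1, by omega⟩ (by show s0 ≤ s.val - 1; omega)
        (by show s.val - 1 ≤ N; omega)] at hleft
      exact lt_irrefl _ hleft
  refine ⟨hvs, ?_⟩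
  have hleft : f s.castSucc < f (⟨s0 - 1, by omega⟩ : Fin (N + 1)).castSucc :=
    h.2.2.2.1 ⟨s0 - 1, by omega⟩ (by show s0 - 1 + 1 = s.val; omega)
  have e : (⟨s0 - 1, by omega⟩ : Fin (N + 1)).castSucc =
      (⟨s0 - 1, by omega⟩ : Fin (N + 2)) := Fin.ext rfl
  rw [e, ← hfs] at hleft
  exact hleft

include h0 hsN htail in
lemma last_is_min (hab : f (Fin.last (N + 1)) < f (⟨N, by omega⟩ : Fin (N + 2))) :
    ∃ k, MinFlat f (Fin.last (N + 1)) k := by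
  have hv := hvalt htail
  refine ⟨1, one_pos, by simp only [Fin.val_last]; omega, ?_, ?_, ?_⟩
  · intro j h1 h2
    simp only [Fin.val_last] at h1 h2
    rw [show j = Fin.last (N + 1) from Fin.ext
      (by simp only [Fin.val_last]; have := j.isLt; omega)]
  · intro j hj
    simp only [Fin.val_last] at hj
    rw [hv j (by omega) (by omega)]
    exact hab
  · intro j hj
    simp only [Fin.val_last] at hj
    exact absurd hj (by have := j.isLt; omega)

end C23
section C23b

variable {L : Type*} [LinearOrder L] {N : ℕ} {f : Fin (N + 2) → L}

open NumMinAux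

variable {s0 : ℕ} (h0 : 0 < s0) (hsN : s0 ≤ N)
  (htail : ∀ j : Fin (N + 1), s0 ≤ j.val → f j.castSucc = f (⟨N, by omega⟩ : Fin (N + 2)))

include h0 hsN htail in
lemma caseC2_min (hab : f (Fin.last (N + 1)) < f (⟨N, by omega⟩ : Fin (N + 2)))
    (hprev : f (⟨N, by omega⟩ : Fin (N + 2)) < f (⟨s0 - 1, by omega⟩ : Fin (N + 2))) :
    MinS f = insert (Fin.last (N + 1)) (Fin.castSucc ''
      (MinS (fun i : Fin (N + 1) => f i.castSucc) \ {(⟨s0, Nat.lt_succ_of_le hsN⟩ : Fin (N + 1))})) := by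
  have hv := hvalt htail
  ext s'
  simp only [MinS, Set.mem_setOf_eq, Set.mem_insert_iff, Set.mem_image, Set.mem_diff,
    Set.mem_singleton_iff]
  constructor
  · rintro ⟨k, h⟩
    rcases Nat.lt_or_ge s'.val (N + 1) with hs' | hge
    · have hs'N : s'.val ≤ N := by omega
      have hkN := min_bound hab hs'N h
      have hcs : (⟨s'.val, by omega⟩ : Fin (N + 1)).castSucc = s' := Fin.ext rfl
      refine Or.inr ⟨⟨s'.val, by omega⟩, ⟨⟨k, ?_⟩, ?_⟩, hcs⟩
      · exact down_min (by rw [hcs]; exact h) (by show s'.val + k ≤ N + 1; omega)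
      · intro hEq
        have hveq : s'.val = s0 := congrArg Fin.val hEq
        have hr : f s' < f (⟨s'.val + k, by omega⟩ : Fin (N + 2)) :=
          h.2.2.2.2 ⟨s'.val + k, by omega⟩ rfl
        rw [hv s' (by omega) (by omega), hv ⟨s'.val + k, by omega⟩
          (by show s0 ≤ s'.val + k; omega) (by show s'.val + k ≤ N; omega)] at hr
        exact lt_irrefl _ hr
    · exact Or.inl (Fin.ext (by simp only [Fin.val_last]; have := s'.isLt; omega))
  · rintro (rfl | ⟨s, ⟨⟨k, h⟩, hne⟩, rfl⟩)
    · exact last_is_min h0 hsN htail hab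
    · have hk0 := h.1
      have hks : s.val + k ≤ N + 1 := h.2.1
      have hkN : s.val + k ≤ N := by
        by_contra hc
        have he : s.val + k = N + 1 := by omega
        have := (ming_end h0 hsN htail hprev.ne' h he).1
        exact hne (Fin.ext this)
      exact ⟨k, up_min h (fun he => absurd he (by omega))⟩

include h0 hsN htail in
lemma caseC2_max
    (hprev : f (⟨N, by omega⟩ : Fin (N + 2)) < f (⟨s0 - 1, by omega⟩ : Fin (N + 2))) :
    MaxS f = Fin.castSucc '' MaxS (fun i : Fin (N + 1) => f i.castSucc) := by
  ext s'
  simp only [MaxS, Set.mem_setOf_eq, Set.mem_image]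
  constructor
  · rintro ⟨k, h⟩
    have hbd : s'.val + k ≤ N + 1 := by have := h.2.2.1; omega
    have hs' : s'.val ≤ N := by have := h.1; omega
    have hkN : s'.val + k ≤ N := by
      by_contra hc
      have he : s'.val + k = N + 1 := by omega
      have := (max_end h0 hsN htail hprev.ne' h he).2
      exact absurd this (not_lt.mpr hprev.le)
    have hcs : (⟨s'.val, by omega⟩ : Fin (N + 1)).castSucc = s' := Fin.ext rfl
    exact ⟨⟨s'.val, by omega⟩, ⟨k, down_max (by rw [hcs]; exact h)
      (by show s'.val + k ≤ N; omega)⟩, hcs⟩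
  · rintro ⟨s, ⟨k, h⟩, rfl⟩
    exact ⟨k, up_max h⟩

include h0 hsN htail in
lemma s0_min_g
    (hprev : f (⟨N, by omega⟩ : Fin (N + 2)) < f (⟨s0 - 1, by omega⟩ : Fin (N + 2))) :
    (⟨s0, Nat.lt_succ_of_le hsN⟩ : Fin (N + 1)) ∈
      MinS (fun i : Fin (N + 1) => f i.castSucc) := by
  have hv := hvalt htail
  refine ⟨N + 1 - s0, by omega, by show s0 + (N + 1 - s0) ≤ N + 1; omega, ?_, ?_, ?_⟩
  · intro j h1 h2
    have h1' : s0 ≤ j.val := h1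
    show f j.castSucc = f (⟨s0, Nat.lt_succ_of_le hsN⟩ : Fin (N + 1)).castSucc
    rw [htail j h1']
    exact (hv (⟨s0, Nat.lt_succ_of_le hsN⟩ : Fin (N + 1)).castSucc (le_refl s0) hsN).symm
  · intro j hj
    have hj' : j.val + 1 = s0 := hj
    rw [show j = (⟨s0 - 1, by omega⟩ : Fin (N + 1)) from Fin.ext (by show j.val = s0 - 1; omega)]
    show f (⟨s0, Nat.lt_succ_of_le hsN⟩ : Fin (N + 1)).castSucc <
      f (⟨s0 - 1, by omega⟩ : Fin (N + 1)).castSucc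
    rw [show (⟨s0 - 1, by omega⟩ : Fin (N + 1)).castSucc =
      (⟨s0 - 1, by omega⟩ : Fin (N + 2)) from Fin.ext rfl]
    rw [hv (⟨s0, Nat.lt_succ_of_le hsN⟩ : Fin (N + 1)).castSucc (le_refl s0) hsN]
    exact hprev
  · intro j hj
    have hj' : j.val = s0 + (N + 1 - s0) := hj
    exact absurd hj' (by have := j.isLt; omega)

include h0 hsN htail in
lemma caseC3_min (hab : f (Fin.last (N + 1)) < f (⟨N, by omega⟩ : Fin (N + 2)))
    (hprev : f (⟨s0 - 1, by omega⟩ : Fin (N + 2)) < f (⟨N, by omega⟩ : Fin (N + 2))) :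
    MinS f = insert (Fin.last (N + 1))
      (Fin.castSucc '' MinS (fun i : Fin (N + 1) => f i.castSucc)) := by
  ext s'
  simp only [MinS, Set.mem_setOf_eq, Set.mem_insert_iff, Set.mem_image]
  constructor
  · rintro ⟨k, h⟩
    rcases Nat.lt_or_ge s'.val (N + 1) with hs' | hge
    · have hs'N : s'.val ≤ N := by omega
      have hkN := min_bound hab hs'N h
      have hcs : (⟨s'.val, by omega⟩ : Fin (N + 1)).castSucc = s' := Fin.ext rfl
      exact Or.inr ⟨⟨s'.val, by omega⟩, ⟨k, down_min (by rw [hcs]; exact h)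
        (by show s'.val + k ≤ N + 1; omega)⟩, hcs⟩
    · exact Or.inl (Fin.ext (by simp only [Fin.val_last]; have := s'.isLt; omega))
  · rintro (rfl | ⟨s, ⟨k, h⟩, rfl⟩)
    · exact last_is_min h0 hsN htail hab
    · have hk0 := h.1
      have hks : s.val + k ≤ N + 1 := h.2.1
      have hkN : s.val + k ≤ N := by
        by_contra hc
        have he : s.val + k = N + 1 := by omega
        have := (ming_end h0 hsN htail hprev.ne h he).2
        exact absurd this (not_lt.mpr hprev.le)
      exact ⟨k, up_min h (fun he => absurd he (by omega))⟩

include h0 hsN htail in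
lemma caseC3_max (hab : f (Fin.last (N + 1)) < f (⟨N, by omega⟩ : Fin (N + 2)))
    (hprev : f (⟨s0 - 1, by omega⟩ : Fin (N + 2)) < f (⟨N, by omega⟩ : Fin (N + 2))) :
    MaxS f = insert ((⟨s0, Nat.lt_succ_of_le hsN⟩ : Fin (N + 1)).castSucc)
      (Fin.castSucc '' MaxS (fun i : Fin (N + 1) => f i.castSucc)) := by
  have hv := hvalt htail
  ext s'
  simp only [MaxS, Set.mem_setOf_eq, Set.mem_insert_iff, Set.mem_image]
  constructor
  · rintro ⟨k, h⟩
    have hbd : s'.val + k ≤ N + 1 := by have := h.2.2.1; omega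
    have hs' : s'.val ≤ N := by have := h.1; omega
    rcases Nat.lt_or_ge (s'.val + k) (N + 1) with hlt | hge
    · have hcs : (⟨s'.val, by omega⟩ : Fin (N + 1)).castSucc = s' := Fin.ext rfl
      exact Or.inr ⟨⟨s'.val, by omega⟩, ⟨k, down_max (by rw [hcs]; exact h)
        (by show s'.val + k ≤ N; omega)⟩, hcs⟩
    · have he : s'.val + k = N + 1 := by omega
      have := (max_end h0 hsN htail hprev.ne h he).1
      exact Or.inl (Fin.ext this)
  · rintro (rfl | ⟨s, ⟨k, h⟩, rfl⟩)
    · refine ⟨N + 1 - s0, by omega, h0, by show s0 + (N + 1 - s0) ≤ N + 2 - 1; omega,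
        ?_, ?_, ?_⟩
      · intro j h1 h2
        have h1' : s0 ≤ j.val := h1
        have h2' : j.val < s0 + (N + 1 - s0) := h2
        rw [hv j h1' (by omega),
          hv (⟨s0, Nat.lt_succ_of_le hsN⟩ : Fin (N + 1)).castSucc (le_refl s0) hsN]
      · intro j hj
        have hj' : j.val + 1 = s0 := hj
        rw [show j = (⟨s0 - 1, by omega⟩ : Fin (N + 2)) from Fin.ext (by show j.val = s0 - 1; omega),
          hv (⟨s0, Nat.lt_succ_of_le hsN⟩ : Fin (N + 1)).castSucc (le_refl s0) hsN]
        exact hprev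
      · intro j hj
        have hj' : j.val = s0 + (N + 1 - s0) := hj
        rw [show j = Fin.last (N + 1) from Fin.ext (by simp only [Fin.val_last]; omega),
          hv (⟨s0, Nat.lt_succ_of_le hsN⟩ : Fin (N + 1)).castSucc (le_refl s0) hsN]
        exact hab
    · exact ⟨k, up_max h⟩

include hsN htail in
lemma s0_not_max_g :
    (⟨s0, Nat.lt_succ_of_le hsN⟩ : Fin (N + 1)) ∉
      MaxS (fun i : Fin (N + 1) => f i.castSucc) := by
  have hv := hvalt htail
  rintro ⟨k, h⟩
  have hbd0 : s0 + k ≤ N + 1 - 1 := h.2.2.1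
  have hk0 := h.1
  have hr : f (⟨s0 + k, by omega⟩ : Fin (N + 1)).castSucc <
      f (⟨s0, Nat.lt_succ_of_le hsN⟩ : Fin (N + 1)).castSucc :=
    h.2.2.2.2.2 ⟨s0 + k, by omega⟩ rfl
  rw [hv (⟨s0 + k, by omega⟩ : Fin (N + 1)).castSucc (by show s0 ≤ s0 + k; omega)
    (by show s0 + k ≤ N; omega),
    hv (⟨s0, Nat.lt_succ_of_le hsN⟩ : Fin (N + 1)).castSucc (le_refl s0) hsN] at hr
  exact lt_irrefl _ hr

end C23b
namespace NumMinAux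

variable {L : Type*} [LinearOrder L]

lemma main (N : ℕ) : ∀ f : Fin (N + 1) → L, (MinS f).ncard = (MaxS f).ncard + 1 := by
  induction N with
  | zero =>
    intro f
    have hmin : MinS f = {(0 : Fin 1)} := by
      ext s
      simp only [MinS, Set.mem_setOf_eq, Set.mem_singleton_iff]
      constructor
      · intro _
        exact Fin.ext (by simp only [Fin.val_zero]; have := s.isLt; omega)
      · rintro rfl
        refine ⟨1, one_pos, by omega, ?_, ?_, ?_⟩
        · intro j _ _
          rw [show j = 0 from Fin.ext (by simp only [Fin.val_zero]; have := j.isLt; omega)]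
        · intro j hj
          exact absurd hj (by have := j.isLt; omega)
        · intro j hj
          exact absurd hj (by have := j.isLt; omega)
    have hmax : MaxS f = (∅ : Set (Fin 1)) := by
      ext s
      simp only [MaxS, Set.mem_setOf_eq, Set.mem_empty_iff_false, iff_false]
      rintro ⟨k, h⟩
      exact absurd h.2.1 (by have := s.isLt; omega)
    rw [hmin, hmax, Set.ncard_singleton, Set.ncard_empty]
  | succ N ih =>
    intro f
    have hinj : Function.Injective (Fin.castSucc : Fin (N + 1) → Fin (N + 2)) :=
      Fin.castSucc_injective (N + 1)
    rcases le_or_gt (f (⟨N, by omega⟩ : Fin (N + 2))) (f (Fin.last (N + 1))) with hab | hab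
    · rw [caseAB_min hab, caseAB_max hab, Set.ncard_image_of_injective _ hinj,
        Set.ncard_image_of_injective _ hinj]
      exact ih _
    · -- last value strictly smaller
      set S : Set ℕ :=
        {t | ∀ j : Fin (N + 1), t ≤ j.val → f j.castSucc = f (⟨N, by omega⟩ : Fin (N + 2))}
        with hS
      have hNS : N ∈ S := by
        intro j hj
        rw [show j = Fin.last N from Fin.ext
          (by simp only [Fin.val_last]; have := j.isLt; omega)]
        exact congrArg f (Fin.ext rfl)
      have htail : ∀ j : Fin (N + 1), sInf S ≤ j.val →
          f j.castSucc = f (⟨N, by omega⟩ : Fin (N + 2)) := Nat.sInf_mem ⟨N, hNS⟩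
      have hs0N : sInf S ≤ N := Nat.sInf_le hNS
      rcases Nat.eq_zero_or_pos (sInf S) with h0 | h0
      · have htail' : ∀ j : Fin (N + 1),
            f j.castSucc = f (⟨N, by omega⟩ : Fin (N + 2)) :=
          fun j => htail j (by omega)
        rw [caseC1_min htail' hab, caseC1_max htail', Set.ncard_singleton, Set.ncard_empty]
      · have hnot : sInf S - 1 ∉ S := Nat.notMem_of_lt_sInf (by omega)
        have hprevne : f (⟨sInf S - 1, by omega⟩ : Fin (N + 2)) ≠
            f (⟨N, by omega⟩ : Fin (N + 2)) := by
          have hnot' : ∃ j : Fin (N + 1), sInf S - 1 ≤ j.val ∧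
              ¬ f j.castSucc = f (⟨N, by omega⟩ : Fin (N + 2)) := by
            by_contra hc
            push_neg at hc
            exact hnot (fun j hj => hc j hj)
          obtain ⟨j, hj1, hj2⟩ := hnot'
          have hjv : j.val = sInf S - 1 := by
            rcases Nat.lt_or_ge j.val (sInf S) with hl | hg
            · omega
            · exact absurd (htail j hg) hj2
          rw [show (⟨sInf S - 1, by omega⟩ : Fin (N + 2)) = j.castSucc from
            Fin.ext (by simp only [Fin.coe_castSucc, hjv])]
          exact hj2
        rcases hprevne.lt_or_gt with hc3 | hc2
        · -- C3 : interior max created at sInf S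
          have hnm1 : Fin.last (N + 1) ∉
              Fin.castSucc '' MinS (fun i : Fin (N + 1) => f i.castSucc) :=
            last_notmem _
          have hnm2 : (⟨sInf S, Nat.lt_succ_of_le hs0N⟩ : Fin (N + 1)).castSucc ∉
              Fin.castSucc '' MaxS (fun i : Fin (N + 1) => f i.castSucc) := by
            intro hm
            exact s0_not_max_g hs0N htail (hinj.mem_set_image.mp hm)
          rw [caseC3_min h0 hs0N htail hab hc3, caseC3_max h0 hs0N htail hab hc3,
            Set.ncard_insert_of_notMem hnm1, Set.ncard_insert_of_notMem hnm2,
            Set.ncard_image_of_injective _ hinj, Set.ncard_image_of_injective _ hinj,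
            ih]
        · -- C2 : a boundary min moves to the last index
          have hnm1 : Fin.last (N + 1) ∉ Fin.castSucc ''
              (MinS (fun i : Fin (N + 1) => f i.castSucc) \
                {(⟨sInf S, Nat.lt_succ_of_le hs0N⟩ : Fin (N + 1))}) :=
            last_notmem _
          have hmem := s0_min_g h0 hs0N htail hc2
          rw [caseC2_min h0 hs0N htail hab hc2, caseC2_max h0 hs0N htail hc2,
            Set.ncard_insert_of_notMem hnm1, Set.ncard_image_of_injective _ hinj,
            Set.ncard_diff_singleton_add_one hmem,
            Set.ncard_image_of_injective _ hinj, ih]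

end NumMinAux

theorem num_minima_eq_num_interior_maxima_add_one {N : ℕ} {L : Type*}
    [LinearOrder L] (hN : 1 ≤ N) (f : Fin N → L) :
    Nat.card {s : Fin N // ∃ k, MinFlat f s k} =
      Nat.card {s : Fin N // ∃ k, IntMaxFlat f s k} + 1 := by
  obtain ⟨M, rfl⟩ : ∃ M, N = M + 1 := ⟨N - 1, by omega⟩
  have h := NumMinAux.main M f
  have e1 : Nat.card {s : Fin (M + 1) // ∃ k, MinFlat f s k} =
      (NumMinAux.MinS f).ncard := Nat.card_coe_set_eq _
  have e2 : Nat.card {s : Fin (M + 1) // ∃ k, IntMaxFlat f s k} =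
      (NumMinAux.MaxS f).ncard := Nat.card_coe_set_eq _
  rw [e1, e2]
  exact h
end

section
/- Let f : Fin N → L on the linear domain, and suppose the level set L_l = {i | f i = l} contains exactly k_min flat local minima and k_max flat interior local maxima (and no other flats). Then the number of connected components of {i | f i ≤ l} equals the number of connected components of {i | f i < l} plus k_min minus k_max. In particular, if k_min = k_max, the number of connected components is unchanged when the level l is included. -/
/-- A maximal flat of the level set of `f` at level `l`. -/
def MaxlFlat {N : ℕ} {L : Type*} [LinearOrder L]
    (f : Fin N → L) (s : Fin N) (k : ℕ) (l : L) : Prop :=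
  0 < k ∧ s.val + k ≤ N ∧
  (∀ j : Fin N, s.val ≤ j.val → j.val < s.val + k → f j = l) ∧
  (∀ j : Fin N, j.val + 1 = s.val → f j ≠ l) ∧
  (∀ j : Fin N, j.val = s.val + k → f j ≠ l)

set_option linter.all false

namespace WLCC

variable {N : ℕ}

lemma adj_symm (S : Set (Fin N)) : Symmetric (AdjStep S) := by
  rintro x y ⟨hx, hy, h⟩; exact ⟨hy, hx, h.symm⟩

lemma conn_symm {S : Set (Fin N)} {a b : Fin N} (h : ConnectedIn S a b) :
    ConnectedIn S b a := (@Relation.ReflTransGen.stdSymm _ _ ⟨adj_symm S⟩).symm _ _ h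

lemma conn_trans {S : Set (Fin N)} {a b c : Fin N} (h : ConnectedIn S a b)
    (h' : ConnectedIn S b c) : ConnectedIn S a c := Relation.ReflTransGen.trans h h'

lemma conn_between {S : Set (Fin N)} {a b : Fin N} (ha : a ∈ S)
    (h : ConnectedIn S a b) :
    ∀ c : Fin N, (a.val ≤ c.val ∧ c.val ≤ b.val) ∨ (b.val ≤ c.val ∧ c.val ≤ a.val) →
      c ∈ S := by
  induction h with
  | refl =>
    intro c hc
    have : c = a := Fin.ext (by omega)
    simpa [this] using ha
  | tail _ step ih =>
    rename_i b b' _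
    intro c hc
    obtain ⟨hb, hb', hadj⟩ := step
    by_cases hcb : c.val = b'.val
    · have : c = b' := Fin.ext hcb
      simpa [this] using hb'
    · exact ih c (by omega)

lemma chain_up {S : Set (Fin N)} :
    ∀ (d : ℕ) (a b : Fin N), a.val + d = b.val →
      (∀ c : Fin N, a.val ≤ c.val → c.val ≤ b.val → c ∈ S) → ConnectedIn S a b := by
  intro d
  induction d with
  | zero =>
    intro a b hab _
    have : a = b := Fin.ext (by omega)
    exact this ▸ Relation.ReflTransGen.refl
  | succ d ih =>
    intro a b hab hall
    have hb : b.val - 1 < N := by omega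
    set b' : Fin N := ⟨b.val - 1, hb⟩ with hb'
    have h1 : ConnectedIn S a b' := by
      refine ih a b' (by simp [hb'] <;> omega) ?_
      intro c h1 h2
      exact hall c h1 (by simp [hb'] at h2; omega)
    refine Relation.ReflTransGen.tail h1 ?_
    refine ⟨hall b' (by simp [hb'] <;> omega) (by simp [hb'] <;> omega), hall b (by omega) le_rfl,
      Or.inl (by simp [hb'] <;> omega)⟩

/-- left endpoints of runs -/
def leftEnds (S : Set (Fin N)) : Set (Fin N) :=
  {i | i ∈ S ∧ ∀ j : Fin N, j.val + 1 = i.val → j ∉ S}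

lemma ncard_comps (S : Set (Fin N)) :
    {C | IsConnComp S C}.ncard = (leftEnds S).ncard := by
  classical
  set g : Fin N → Set (Fin N) := fun i => {b | ConnectedIn S i b} with hg
  have hinj : Set.InjOn g (leftEnds S) := by
    intro i1 h1 i2 h2 heq
    have hc : ConnectedIn S i2 i1 := by
      have : i1 ∈ g i1 := Relation.ReflTransGen.refl
      rw [heq] at this; exact this
    by_contra hne
    have hne' : i1.val ≠ i2.val := fun h => hne (Fin.ext h)
    rcases lt_or_gt_of_ne hne' with hlt | hlt
    · -- i1 < i2 ; pred of i2 is in S, contradiction with h2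
      have hp : (⟨i2.val - 1, by omega⟩ : Fin N) ∈ S :=
        conn_between h2.1 hc ⟨i2.val - 1, by omega⟩ (by simp; omega)
      exact h2.2 ⟨i2.val - 1, by omega⟩ (by simp; omega) hp
    · have hp : (⟨i1.val - 1, by omega⟩ : Fin N) ∈ S :=
        conn_between h2.1 hc ⟨i1.val - 1, by omega⟩ (by simp; omega)
      exact h1.2 ⟨i1.val - 1, by omega⟩ (by simp; omega) hp
  have himg : g '' leftEnds S = {C | IsConnComp S C} := by
    apply Set.Subset.antisymm
    · rintro _ ⟨i, hi, rfl⟩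
      exact ⟨i, hi.1, rfl⟩
    · rintro C ⟨a, ha, rfl⟩
      have hP : ∃ m, ∀ c : Fin N, m ≤ c.val → c.val ≤ a.val → c ∈ S := by
        refine ⟨a.val, fun c h1 h2 => ?_⟩
        have : c = a := Fin.ext (by omega)
        simpa [this] using ha
      set m0 := Nat.find hP with hm0
      have hPm0 := Nat.find_spec hP
      have hm0a : m0 ≤ a.val := Nat.find_le (by
        intro c h1 h2
        have : c = a := Fin.ext (by omega)
        simpa [this] using ha)
      have hm0N : m0 < N := by omega
      set i0 : Fin N := ⟨m0, hm0N⟩ with hi0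
      have hi0S : i0 ∈ S := hPm0 i0 le_rfl hm0a
      have hi0le : i0 ∈ leftEnds S := by
        refine ⟨hi0S, ?_⟩
        intro j hj hjS
        have hj' : j.val + 1 = m0 := hj
        have : m0 ≤ j.val := Nat.find_le (by
          intro c h1 h2
          by_cases hc : c.val = j.val
          · have : c = j := Fin.ext hc
            simpa [this] using hjS
          · exact hPm0 c (by omega) h2)
        omega
      have hconn : ConnectedIn S i0 a :=
        chain_up (a.val - m0) i0 a (by simp [hi0]; omega)
          (fun c h1 h2 => hPm0 c h1 h2)
      refine ⟨i0, hi0le, ?_⟩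
      ext b
      constructor
      · intro hb; exact conn_trans (conn_symm hconn) hb
      · intro hb; exact conn_trans hconn hb
  rw [← himg, Set.ncard_image_of_injOn hinj]

end WLCC

namespace WLCC

variable {N : ℕ} {L : Type*} [LinearOrder L]

variable (f : Fin N → L) (l : L)

def A : Set (Fin N) := {i | f i < l ∧ ∀ j : Fin N, j.val + 1 = i.val → l < f j}
def B : Set (Fin N) := {i | f i = l ∧ ∀ j : Fin N, j.val + 1 = i.val → l < f j}
def C : Set (Fin N) := {i | f i < l ∧ ∃ j : Fin N, j.val + 1 = i.val ∧ f j = l}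

lemma le_decomp : leftEnds {i | f i ≤ l} = A f l ∪ B f l := by
  ext i
  constructor
  · rintro ⟨h1, h2⟩
    have h2' : ∀ j : Fin N, j.val + 1 = i.val → l < f j := by
      intro j hj
      have := h2 j hj
      simp only [Set.mem_setOf_eq] at this
      exact lt_of_not_ge this
    rcases lt_or_eq_of_le (h1 : f i ≤ l) with h | h
    · exact Or.inl ⟨h, h2'⟩
    · exact Or.inr ⟨h, h2'⟩
  · rintro (⟨h1, h2⟩ | ⟨h1, h2⟩) <;>
      exact ⟨by simp [le_of_lt, le_of_eq, h1], fun j hj => by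
        simp only [Set.mem_setOf_eq, not_le]; exact h2 j hj⟩

lemma lt_decomp : leftEnds {i | f i < l} = A f l ∪ C f l := by
  ext i
  constructor
  · rintro ⟨h1, h2⟩
    simp only [Set.mem_setOf_eq] at h1
    have h2' : ∀ j : Fin N, j.val + 1 = i.val → l ≤ f j := by
      intro j hj
      have := h2 j hj
      simp only [Set.mem_setOf_eq] at this
      exact le_of_not_gt this
    by_cases hA : ∀ j : Fin N, j.val + 1 = i.val → l < f j
    · exact Or.inl ⟨h1, hA⟩
    · push_neg at hA
      obtain ⟨j, hj, hjle⟩ := hA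
      exact Or.inr ⟨h1, j, hj, le_antisymm hjle (h2' j hj)⟩
  · rintro (⟨h1, h2⟩ | ⟨h1, j, hj, hjl⟩)
    · exact ⟨h1, fun j hj => by
        simp only [Set.mem_setOf_eq, not_lt]; exact le_of_lt (h2 j hj)⟩
    · refine ⟨h1, fun j' hj' => ?_⟩
      have : j' = j := Fin.ext (by omega)
      simp only [Set.mem_setOf_eq, not_lt, this, hjl]; exact le_rfl

lemma AB_disj : Disjoint (A f l) (B f l) := by
  rw [Set.disjoint_left]
  rintro i ⟨h1, _⟩ ⟨h2, _⟩
  exact absurd h2 (ne_of_lt h1)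

lemma AC_disj : Disjoint (A f l) (C f l) := by
  rw [Set.disjoint_left]
  rintro i ⟨_, h2⟩ ⟨_, j, hj, hjl⟩
  exact absurd hjl (ne_of_gt (h2 j hj))


lemma B_eq (honly : ∀ s k, MaxlFlat f s k l → MinFlat f s k ∨ IntMaxFlat f s k) :
    B f l = {s : Fin N | ∃ k, MinFlat f s k ∧ f s = l} := by
  classical
  ext s
  constructor
  · rintro ⟨h1, h2⟩
    -- build the maximal flat starting at s
    have hQ : ∃ t, s.val + t = N ∨ ∀ h : s.val + t < N, f ⟨s.val + t, h⟩ ≠ l := by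
      exact ⟨N - s.val, Or.inl (by omega)⟩
    set k := Nat.find hQ with hk
    have hQk := Nat.find_spec hQ
    rw [← hk] at hQk
    have hk0 : 0 < k := by
      rcases Nat.eq_zero_or_pos k with h | h
      · exfalso
        have := hQk
        rw [h] at this
        rcases this with h' | h'
        · omega
        · exact h' (by simpa using s.isLt) (by simpa [Fin.ext_iff] using h1)
      · exact h
    have hrun : ∀ t, t < k → ∃ h : s.val + t < N, f ⟨s.val + t, h⟩ = l := by
      intro t ht
      have hmin := Nat.find_min hQ ht
      push_neg at hmin
      obtain ⟨hne, hlt, hval⟩ := hmin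
      exact ⟨hlt, hval⟩
    have hkN : s.val + k ≤ N := by
      by_contra hc
      push_neg at hc
      obtain ⟨hlt, -⟩ := hrun (N - s.val) (by omega)
      omega
    have hmaxl : MaxlFlat f s k l := by
      refine ⟨hk0, hkN, ?_, ?_, ?_⟩
      · intro j hj1 hj2
        obtain ⟨h, hval⟩ := hrun (j.val - s.val) (by omega)
        have : j = ⟨s.val + (j.val - s.val), h⟩ := Fin.ext (by simp; omega)
        rw [this]; exact hval
      · intro j hj
        exact ne_of_gt (h2 j hj)
      · intro j hj
        rcases hQk with h | h
        · omega
        · have : j = ⟨s.val + k, by omega⟩ := Fin.ext (by simp; omega)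
          rw [this]; exact h (by omega)
    rcases honly s k hmaxl with h | h
    · exact ⟨k, h, h1⟩
    · exfalso
      obtain ⟨_, hs0, _, _, hleft, _⟩ := h
      have := hleft ⟨s.val - 1, by omega⟩ (by simp; omega)
      have := h2 ⟨s.val - 1, by omega⟩ (by simp; omega)
      rw [h1] at *
      exact absurd this (not_lt.mpr (le_of_lt ‹f ⟨s.val - 1, _⟩ < l›))
  · rintro ⟨k, ⟨_, _, _, hleft, _⟩, hsl⟩
    exact ⟨hsl, fun j hj => hsl ▸ hleft j hj⟩


lemma intmax_k_unique {s : Fin N} {k k' : ℕ} (h : IntMaxFlat f s k)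
    (h' : IntMaxFlat f s k') : k = k' := by
  by_contra hne
  rcases lt_or_gt_of_ne hne with hlt | hlt
  · have hN : s.val + k < N := by
      have := h.2.2.1; omega
    have h1 := h.2.2.2.2.2 ⟨s.val + k, hN⟩ (by simp)
    have h2 := h'.2.2.2.1 ⟨s.val + k, hN⟩ (by simp) (by simp; omega)
    rw [h2] at h1; exact lt_irrefl _ h1
  · have hN : s.val + k' < N := by
      have := h'.2.2.1; omega
    have h1 := h'.2.2.2.2.2 ⟨s.val + k', hN⟩ (by simp)
    have h2 := h.2.2.2.1 ⟨s.val + k', hN⟩ (by simp) (by simp; omega)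
    rw [h2] at h1; exact lt_irrefl _ h1

def T : Set (Fin N) := {s | ∃ k, IntMaxFlat f s k ∧ f s = l}

lemma C_ncard (honly : ∀ s k, MaxlFlat f s k l → MinFlat f s k ∨ IntMaxFlat f s k) :
    (C f l).ncard = (T f l).ncard := by
  classical
  have hbnd : ∀ s : Fin N, ∀ h : ∃ k, IntMaxFlat f s k ∧ f s = l,
      s.val + h.choose < N := by
    intro s h
    have := h.choose_spec.1.2.2.1
    have := s.isLt
    omega
  set g : Fin N → Fin N := fun s =>
    if h : ∃ k, IntMaxFlat f s k ∧ f s = l then ⟨s.val + h.choose, hbnd s h⟩ else s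
    with hgdef
  have hgval : ∀ s : Fin N, ∀ h : ∃ k, IntMaxFlat f s k ∧ f s = l,
      ∀ k, IntMaxFlat f s k → (g s).val = s.val + k := by
    intro s h k hk
    have hgs : g s = ⟨s.val + h.choose, hbnd s h⟩ := by
      simp only [hgdef]; rw [dif_pos h]
    rw [hgs]
    simp [intmax_k_unique f h.choose_spec.1 hk]
  have hmaps : ∀ s ∈ T f l, g s ∈ C f l := by
    rintro s ⟨k, hk, hsl⟩
    have hval := hgval s ⟨k, hk, hsl⟩ k hk
    have hN : s.val + k < N := by have := hk.2.2.1; have := s.isLt; omega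
    have hgs : g s = ⟨s.val + k, hN⟩ := Fin.ext (by rw [hval])
    rw [hgs]
    refine ⟨?_, ⟨s.val + k - 1, by have := hk.1; omega⟩, by simp; have := hk.1; omega, ?_⟩
    · have := hk.2.2.2.2.2 ⟨s.val + k, hN⟩ (by simp)
      exact this.trans_le (le_of_eq hsl)
    · have := hk.2.2.2.1 ⟨s.val + k - 1, by have := hk.1; omega⟩
        (by simp; have := hk.1; omega) (by simp; have := hk.1; omega)
      exact this.trans hsl
  have hinj : Set.InjOn g (T f l) := by
    rintro s1 ⟨k1, hk1, hs1⟩ s2 ⟨k2, hk2, hs2⟩ heq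
    have hv1 := hgval s1 ⟨k1, hk1, hs1⟩ k1 hk1
    have hv2 := hgval s2 ⟨k2, hk2, hs2⟩ k2 hk2
    have hvv : s1.val + k1 = s2.val + k2 := by rw [← hv1, ← hv2, heq]
    by_contra hne
    have hne' : s1.val ≠ s2.val := fun h => hne (Fin.ext h)
    rcases lt_or_gt_of_ne hne' with hlt | hlt
    · have hp : s2.val - 1 < N := by omega
      have hrun := hk1.2.2.2.1 ⟨s2.val - 1, hp⟩ (by simp; omega)
        (by simp; have := hk2.1; omega)
      have hleft := hk2.2.2.2.2.1 ⟨s2.val - 1, hp⟩ (by simp; have := hk2.2.1; omega)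
      rw [hrun, hs1, hs2] at hleft; exact lt_irrefl _ hleft
    · have hp : s1.val - 1 < N := by omega
      have hrun := hk2.2.2.2.1 ⟨s1.val - 1, hp⟩ (by simp; omega)
        (by simp; have := hk1.1; omega)
      have hleft := hk1.2.2.2.2.1 ⟨s1.val - 1, hp⟩ (by simp; have := hk1.2.1; omega)
      rw [hrun, hs1, hs2] at hleft; exact lt_irrefl _ hleft
  have hsurj : ∀ i ∈ C f l, ∃ s ∈ T f l, g s = i := by
    rintro i ⟨hi, j, hj, hjl⟩
    have hR : ∃ m, ∀ t, m ≤ t → t < i.val → ∀ h : t < N, f ⟨t, h⟩ = l := by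
      refine ⟨j.val, fun t h1 h2 h3 => ?_⟩
      have : (⟨t, h3⟩ : Fin N) = j := Fin.ext (by simp; omega)
      rw [this]; exact hjl
    set m0 := Nat.find hR with hm0
    have hspec := Nat.find_spec hR
    rw [← hm0] at hspec
    have hm0j : m0 ≤ j.val := Nat.find_le (by
      intro t h1 h2 h3
      have : (⟨t, h3⟩ : Fin N) = j := Fin.ext (by simp; omega)
      rw [this]; exact hjl)
    have hm0N : m0 < N := by have := j.isLt; omega
    set s : Fin N := ⟨m0, hm0N⟩ with hs
    set k := i.val - m0 with hkdef
    have hk0 : 0 < k := by have := j.isLt; omega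
    have hsl : f s = l := hspec m0 le_rfl (by omega) hm0N
    have hmaxl : MaxlFlat f s k l := by
      refine ⟨hk0, by simp [hs]; have := i.isLt; omega, ?_, ?_, ?_⟩
      · intro j' h1 h2
        have : j' = ⟨j'.val, j'.isLt⟩ := Fin.ext rfl
        rw [this]
        exact hspec j'.val (by simp [hs] at h1; omega) (by simp [hs] at h2; omega) _
      · intro j' hj'
        intro hfj'
        have : m0 ≤ j'.val := Nat.find_le (by
          intro t h1 h2 h3
          by_cases ht : t = j'.val
          · have : (⟨t, h3⟩ : Fin N) = j' := Fin.ext (by simp [ht])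
            rw [this]; exact hfj'
          · exact hspec t (by simp [hs] at hj'; omega) h2 h3)
        simp [hs] at hj'; omega
      · intro j' hj'
        have : j' = i := Fin.ext (by simp [hs] at hj'; omega)
        rw [this]; exact ne_of_lt hi
    rcases honly s k hmaxl with h | h
    · exfalso
      have hN : s.val + k < N := by simp [hs]; omega
      have hgt := h.2.2.2.2 ⟨s.val + k, hN⟩ (by simp)
      have hie : (⟨s.val + k, hN⟩ : Fin N) = i := Fin.ext (by simp [hs]; omega)
      rw [hie, hsl] at hgt
      exact absurd hi (not_lt.mpr hgt.le)
    · refine ⟨s, ⟨k, h, hsl⟩, ?_⟩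
      have := hgval s ⟨k, h, hsl⟩ k h
      exact Fin.ext (by rw [this]; simp [hs]; omega)
  have himg : g '' T f l = C f l := by
    apply Set.Subset.antisymm
    · rintro _ ⟨s, hsT, rfl⟩; exact hmaps s hsT
    · intro i hiC
      obtain ⟨s, hsT, hgs⟩ := hsurj i hiC
      exact ⟨s, hsT, hgs⟩
  rw [← himg, Set.ncard_image_of_injOn hinj]

end WLCC

theorem within_level_component_count {N : ℕ} {L : Type*} [LinearOrder L]
    (f : Fin N → L) (l : L) (kmin kmax : ℕ)
    -- every maximal flat of the level set at `l` is a flat local minimum or a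
    -- flat interior local maximum (no other flats)
    (honly : ∀ s k, MaxlFlat f s k l → MinFlat f s k ∨ IntMaxFlat f s k)
    (hkmin : kmin = Nat.card {s : Fin N // ∃ k, MinFlat f s k ∧ f s = l})
    (hkmax : kmax = Nat.card {s : Fin N // ∃ k, IntMaxFlat f s k ∧ f s = l}) :
    {C : Set (Fin N) | IsConnComp {i | f i ≤ l} C}.ncard =
      {C : Set (Fin N) | IsConnComp {i | f i < l} C}.ncard + kmin - kmax := by
  classical
  rw [WLCC.ncard_comps, WLCC.ncard_comps, WLCC.le_decomp, WLCC.lt_decomp,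
    Set.ncard_union_eq (WLCC.AB_disj f l) (Set.toFinite _) (Set.toFinite _),
    Set.ncard_union_eq (WLCC.AC_disj f l) (Set.toFinite _) (Set.toFinite _)]
  have hB : (WLCC.B f l).ncard = kmin := by
    rw [WLCC.B_eq f l honly, hkmin, ← Nat.card_coe_set_eq]
    rfl
  have hC : (WLCC.C f l).ncard = kmax := by
    rw [WLCC.C_ncard f l honly, hkmax, ← Nat.card_coe_set_eq]
    rfl
  omega
end
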